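/- arXiv:1608.01602 — 2 statements merged into one kernel-verified Lean document; each statement's English description precedes it below -/
import Mathlib

section
/- Suppose the non-concentration assumption holds on a set I ⊂ ℝ with exponent δ > 0. Then there exists C < ∞ such that for all n ≥ 1, all t ∈ I and all α ≠ 0: P( |F_n(t)| ≥ |α|^{−1} ) ≤ C·2^{(c−δ)n}·|α|, where F_n(t) = ⟨φ_n, (H_{n,n−1} − t)^{−1} φ_n⟩ (defined almost surely). -/
open MeasureTheory ProbabilityTheory Matrix Filter Topology

noncomputable section

/-- Hierarchical (ultrametric) distance on `ℕ₀ = {0,1,2,…}`: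
`d(j,k) = min {r ≥ 0 | ⌊j/2^r⌋ = ⌊k/2^r⌋}`. -/
def hdist (j k : ℕ) : ℕ := sInf {r | j / 2 ^ r = k / 2 ^ r}

lemma hdist_comm (j k : ℕ) : hdist j k = hdist k j := by
  unfold hdist; congr 1; ext r; exact eq_comm

/-- Matrix entry of the hierarchical Laplacian `Δ = ∑_{r ≥ 1} p_r E_r`,
restricted to a block `B_n` (the entry only depends on the hierarchical distance):
`Δ(j,k) = ∑_{r ≥ max(1, d(j,k))} p_r · 2^{-r}`. -/
def lapEntry (p : ℕ → ℝ) (j k : ℕ) : ℝ :=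
  ∑' r : ℕ, if 1 ≤ r ∧ hdist j k ≤ r then p r / 2 ^ r else 0

/-- Matrix entry of the truncated Laplacian `∑_{r = 1}^{m} p_r E_r`. -/
def lapEntryT (p : ℕ → ℝ) (m : ℕ) (j k : ℕ) : ℝ :=
  ∑ r ∈ Finset.Icc 1 m, if hdist j k ≤ r then p r / 2 ^ r else 0

/-- The finite-volume Hamiltonian `H_n = 1_{B_n} (Δ + V) 1_{B_n}`
as a real symmetric `2^n × 2^n` matrix. -/
def Hmat (p : ℕ → ℝ) (v : ℕ → ℝ) (n : ℕ) : Matrix (Fin (2 ^ n)) (Fin (2 ^ n)) ℝ :=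
  fun j k => lapEntry p j k + if j = k then v j else 0

/-- The truncated finite-volume Hamiltonian
`H_{n,m} = 1_{B_n} (∑_{r=1}^m p_r E_r + V) 1_{B_n}`. -/
def HmatT (p : ℕ → ℝ) (v : ℕ → ℝ) (n m : ℕ) : Matrix (Fin (2 ^ n)) (Fin (2 ^ n)) ℝ :=
  fun j k => lapEntryT p m j k + if j = k then v j else 0

lemma Hmat_isHermitian (p : ℕ → ℝ) (v : ℕ → ℝ) (n : ℕ) : (Hmat p v n).IsHermitian := by
  refine Matrix.ext fun j k => ?_
  simp only [conjTranspose_apply, star_trivial, Hmat, lapEntry, hdist_comm (k : ℕ) (j : ℕ)]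
  rcases eq_or_ne j k with h | h
  · subst h; rfl
  · simp [h, h.symm]

lemma HmatT_isHermitian (p : ℕ → ℝ) (v : ℕ → ℝ) (n m : ℕ) : (HmatT p v n m).IsHermitian := by
  refine Matrix.ext fun j k => ?_
  simp only [conjTranspose_apply, star_trivial, HmatT, lapEntryT, hdist_comm (k : ℕ) (j : ℕ)]
  rcases eq_or_ne j k with h | h
  · subst h; rfl
  · simp [h, h.symm]

/-- The site `0 ∈ B_n`. -/
def fin0 (n : ℕ) : Fin (2 ^ n) := ⟨0, Nat.two_pow_pos n⟩

/-- The hierarchical renormalization recursion: `W^{(0)}_k = x_k` and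
`W^{(j+1)}_k = (1/(2 W^{(j)}_{2k}) + 1/(2 W^{(j)}_{2k+1}))⁻¹ + p_{j+1}`. -/
def renIter (p : ℕ → ℝ) : ℕ → (ℕ → ℝ) → (ℕ → ℝ)
  | 0, x => x
  | (j + 1), x => fun k =>
      (1 / (2 * renIter p j x (2 * k)) + 1 / (2 * renIter p j x (2 * k + 1)))⁻¹ + p (j + 1)

/-- Non-concentration assumption on the set `I` with exponent `δ`: the law of the `r`-fold
renormalized potential `W^{(r)}_0` (started from i.i.d. inputs `V_k - E`) is absolutely
continuous with a density `T_{p_r} ⋯ T_{p_1} ρ_E` bounded by `K · 2^{(c-δ) r}`, uniformly in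
`E ∈ I`; equivalently, `P(W^{(r)}_0 ∈ A) ≤ K · 2^{(c-δ) r} · |A|` for every Borel set `A`. -/
def NonConc {Ω : Type*} [MeasurableSpace Ω] (Pr : Measure Ω)
    (p : ℕ → ℝ) (V : ℕ → Ω → ℝ) (I : Set ℝ) (c δ : ℝ) : Prop :=
  ∃ K : ℝ, 0 ≤ K ∧ ∀ r : ℕ, 1 ≤ r → ∀ E ∈ I, ∀ A : Set ℝ, MeasurableSet A →
    Pr {ω | renIter p r (fun k => V k ω - E) 0 ∈ A} ≤
      ENNReal.ofReal (K * 2 ^ ((c - δ) * r)) * volume A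

/-- `2k ∈ B_{n+1}` for `k ∈ B_n`. -/
def dblFin {n : ℕ} (k : Fin (2 ^ n)) : Fin (2 ^ (n + 1)) :=
  ⟨2 * k, by have h := k.isLt; rw [pow_succ]; omega⟩

/-- `2k + 1 ∈ B_{n+1}` for `k ∈ B_n`. -/
def dblFin1 {n : ℕ} (k : Fin (2 ^ n)) : Fin (2 ^ (n + 1)) :=
  ⟨2 * k + 1, by have h := k.isLt; rw [pow_succ]; omega⟩

/-- Hopping sequence `(p_{r+1})_{r ≥ 1}` of the renormalized model. -/
def shiftSeq (p : ℕ → ℝ) : ℕ → ℝ := fun r => p (r + 1)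

/-- The renormalized potential `(RV)_k = 2 V_{2k} V_{2k+1}/(V_{2k} + V_{2k+1}) + p_1`. -/
def renPotM (p : ℕ → ℝ) (v : ℕ → ℝ) : ℕ → ℝ :=
  fun k => 2 * v (2 * k) * v (2 * k + 1) / (v (2 * k) + v (2 * k + 1)) + p 1

/-- The renormalized potential `(RV)_k = (1/(2 V_{2k}) + 1/(2 V_{2k+1}))⁻¹ + p_1`. -/
def renPotH (p : ℕ → ℝ) (v : ℕ → ℝ) : ℕ → ℝ :=
  fun k => (1 / (2 * v (2 * k)) + 1 / (2 * v (2 * k + 1)))⁻¹ + p 1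

/-- The isometry `U_e : ℓ²(B_n) → ℓ²(B_{n+1})`, `U_e δ_k = (δ_{2k} + δ_{2k+1})/√2`,
as a `2^{n+1} × 2^n` matrix. -/
def Uemat (n : ℕ) : Matrix (Fin (2 ^ (n + 1))) (Fin (2 ^ n)) ℝ :=
  fun j k => if (j : ℕ) = 2 * k then (Real.sqrt 2)⁻¹
    else if (j : ℕ) = 2 * k + 1 then (Real.sqrt 2)⁻¹ else 0

/-- The isometry `U_f : ℓ²(B_n) → ℓ²(B_{n+1})`, `U_f δ_k = (δ_{2k} - δ_{2k+1})/√2`,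
as a `2^{n+1} × 2^n` matrix. -/
def Ufmat (n : ℕ) : Matrix (Fin (2 ^ (n + 1))) (Fin (2 ^ n)) ℝ :=
  fun j k => if (j : ℕ) = 2 * k then (Real.sqrt 2)⁻¹
    else if (j : ℕ) = 2 * k + 1 then -(Real.sqrt 2)⁻¹ else 0

/-- The unitary `U = U_e ⊕ U_f : ℓ²(B_n) ⊕ ℓ²(B_n) → ℓ²(B_{n+1})`. -/
def Umat (n : ℕ) : Matrix (Fin (2 ^ (n + 1))) (Fin (2 ^ n) ⊕ Fin (2 ^ n)) ℝ :=
  Matrix.fromCols (Uemat n) (Ufmat n)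

/-- `V_ff = V_ee`: multiplication by `(V_{2k} + V_{2k+1})/2` on `ℓ²(B_n)`. -/
def Vffmat (v : ℕ → ℝ) (n : ℕ) : Matrix (Fin (2 ^ n)) (Fin (2 ^ n)) ℝ :=
  Matrix.diagonal fun k => (v (2 * k) + v (2 * k + 1)) / 2

/-- `V_fe = V_ef`: multiplication by `(V_{2k} - V_{2k+1})/2` on `ℓ²(B_n)`. -/
def Vfemat (v : ℕ → ℝ) (n : ℕ) : Matrix (Fin (2 ^ n)) (Fin (2 ^ n)) ℝ :=
  Matrix.diagonal fun k => (v (2 * k) - v (2 * k + 1)) / 2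

/-- The operator `S = U_e^* - V_fe V_ff^{-1} U_f^* : ℓ²(B_{n+1}) → ℓ²(B_n)`. -/
def Smat (v : ℕ → ℝ) (n : ℕ) : Matrix (Fin (2 ^ n)) (Fin (2 ^ (n + 1))) ℝ :=
  (Uemat n)ᵀ - Vfemat v n * (Vffmat v n)⁻¹ * (Ufmat n)ᵀ

/-- The maximally delocalized vector `φ_n = 2^{-n/2} 1_{B_n}`. -/
def phiVec (n : ℕ) : Fin (2 ^ n) → ℝ := fun _ => (Real.sqrt (2 ^ n))⁻¹

end

noncomputable section

open Finset

lemma hdist_self (j : ℕ) : hdist j j = 0 :=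
  Nat.eq_zero_of_le_zero (Nat.sInf_le (by simp [Set.mem_setOf_eq]))

lemma hdist_nonempty (j k : ℕ) : {r | j / 2 ^ r = k / 2 ^ r}.Nonempty := by
  refine ⟨j + k + 1, ?_⟩
  have h1 : j < 2 ^ (j + k + 1) := lt_of_le_of_lt (by omega) Nat.lt_two_pow_self
  have h2 : k < 2 ^ (j + k + 1) := lt_of_le_of_lt (by omega) Nat.lt_two_pow_self
  simp [Set.mem_setOf_eq, Nat.div_eq_of_lt h1, Nat.div_eq_of_lt h2]

lemma hdist_child {j k : ℕ} (h : j ≠ k) : hdist j k = hdist (j / 2) (k / 2) + 1 := by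
  have hmem : hdist (j / 2) (k / 2) ∈ {r | j / 2 / 2 ^ r = k / 2 / 2 ^ r} :=
    Nat.sInf_mem (hdist_nonempty _ _)
  have key : ∀ r : ℕ, j / 2 / 2 ^ r = k / 2 / 2 ^ r ↔ j / 2 ^ (r + 1) = k / 2 ^ (r + 1) := by
    intro r
    rw [Nat.div_div_eq_div_mul, Nat.div_div_eq_div_mul, pow_succ']
  refine le_antisymm (Nat.sInf_le ?_) (le_csInf (hdist_nonempty _ _) ?_)
  · exact (key _).mp hmem
  · intro r hr
    rcases Nat.eq_zero_or_pos r with rfl | hrpos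
    · simp only [Set.mem_setOf_eq, pow_zero, Nat.div_one] at hr; exact absurd hr h
    · obtain ⟨s, rfl⟩ := Nat.exists_eq_add_of_le hrpos
      have : s + 1 - 1 ∈ {r | j / 2 / 2 ^ r = k / 2 / 2 ^ r} := by
        simpa [Set.mem_setOf_eq] using (key s).mpr (by simpa [Nat.add_comm] using hr)
      have h4 : hdist (j / 2) (k / 2) ≤ s + 1 - 1 := Nat.sInf_le this
      omega

lemma hdist_pos {j k : ℕ} (h : j ≠ k) : 1 ≤ hdist j k := by
  rw [hdist_child h]; omega

lemma div2_eq {k i : ℕ} (hi : i < 2) : (2 * k + i) / 2 = k := by omega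

lemma hdist_children {k l i i' : ℕ} (hi : i < 2) (hi' : i' < 2) (hkl : k ≠ l) :
    hdist (2 * k + i) (2 * l + i') = hdist k l + 1 := by
  have hne : 2 * k + i ≠ 2 * l + i' := by omega
  rw [hdist_child hne, div2_eq hi, div2_eq hi']

lemma hdist_sib {k i i' : ℕ} (hi : i < 2) (hi' : i' < 2) :
    hdist (2 * k + i) (2 * k + i') ≤ 1 := by
  rcases eq_or_ne i i' with rfl | h
  · rw [hdist_self]; omega
  · have hne : 2 * k + i ≠ 2 * k + i' := by omega
    rw [hdist_child hne, div2_eq hi, div2_eq hi', hdist_self]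

/-- sum over a doubled range -/
lemma sum_range_double (g : ℕ → ℝ) (m : ℕ) :
    ∑ j ∈ range (2 * m), g j = ∑ k ∈ range m, (g (2 * k) + g (2 * k + 1)) := by
  induction m with
  | zero => simp
  | succ m ih =>
      have : 2 * (m + 1) = (2 * m + 1) + 1 := by ring
      rw [this, Finset.sum_range_succ, Finset.sum_range_succ, ih, Finset.sum_range_succ]
      ring

lemma sum_fin_double {n : ℕ} (f : Fin (2 ^ (n + 1)) → ℝ) :
    ∑ j, f j = ∑ k : Fin (2 ^ n), (f (dblFin k) + f (dblFin1 k)) := by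
  classical
  set g : ℕ → ℝ := fun j => if h : j < 2 ^ (n + 1) then f ⟨j, h⟩ else 0 with hg
  have h1 : ∑ j, f j = ∑ j ∈ range (2 ^ (n + 1)), g j := by
    rw [← Fin.sum_univ_eq_sum_range]
    exact Finset.sum_congr rfl fun j _ => by simp [hg, j.isLt]
  have h2 : 2 ^ (n + 1) = 2 * 2 ^ n := by rw [pow_succ]; ring
  rw [h1, h2, sum_range_double, ← Fin.sum_univ_eq_sum_range
    (fun k => g (2 * k) + g (2 * k + 1)) (2 ^ n)]
  refine Finset.sum_congr rfl fun k _ => ?_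
  have hk1 : 2 * (k : ℕ) < 2 ^ (n + 1) := by have := k.isLt; omega
  have hk2 : 2 * (k : ℕ) + 1 < 2 ^ (n + 1) := by have := k.isLt; omega
  simp only [hg, dif_pos hk1, dif_pos hk2]
  congr 1

end
noncomputable section
open Finset

local notation "r2" => (Real.sqrt 2)⁻¹

lemma r2_mul_r2 : (Real.sqrt 2)⁻¹ * (Real.sqrt 2)⁻¹ = 1 / 2 := by
  rw [← mul_inv]
  rw [Real.mul_self_sqrt (by norm_num : (2:ℝ) ≥ 0 )]
  norm_num

lemma dblFin_ne_dblFin1 {n : ℕ} (k l : Fin (2 ^ n)) : dblFin k ≠ dblFin1 l := by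
  simp only [Ne, Fin.ext_iff, dblFin, dblFin1]; omega

lemma dblFin_inj_iff {n : ℕ} (k l : Fin (2 ^ n)) : dblFin k = dblFin l ↔ k = l := by
  simp only [Fin.ext_iff, dblFin]; omega

lemma dblFin1_inj_iff {n : ℕ} (k l : Fin (2 ^ n)) : dblFin1 k = dblFin1 l ↔ k = l := by
  simp only [Fin.ext_iff, dblFin1]; omega

lemma Ue_dbl {n : ℕ} (k l : Fin (2 ^ n)) :
    Uemat n (dblFin k) l = if k = l then r2 else 0 := by
  simp only [Uemat, dblFin, Fin.ext_iff]
  rcases eq_or_ne (k : ℕ) (l : ℕ) with h | h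
  · simp [h]
  · have h1 : ¬(2 * (k:ℕ) = 2 * (l:ℕ)) := by omega
    have h2 : ¬(2 * (k:ℕ) = 2 * (l:ℕ) + 1) := by omega
    simp [h1, h2, h]

lemma Ue_dbl1 {n : ℕ} (k l : Fin (2 ^ n)) :
    Uemat n (dblFin1 k) l = if k = l then r2 else 0 := by
  simp only [Uemat, dblFin1, Fin.ext_iff]
  rcases eq_or_ne (k : ℕ) (l : ℕ) with h | h
  · have h1 : ¬(2 * (k:ℕ) + 1 = 2 * (l:ℕ)) := by omega
    simp [h, h1]
  · have h1 : ¬(2 * (k:ℕ) + 1 = 2 * (l:ℕ)) := by omega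
    have h2 : ¬(2 * (k:ℕ) + 1 = 2 * (l:ℕ) + 1) := by omega
    simp [h1, h2, h]

lemma Uf_dbl {n : ℕ} (k l : Fin (2 ^ n)) :
    Ufmat n (dblFin k) l = if k = l then r2 else 0 := by
  simp only [Ufmat, dblFin, Fin.ext_iff]
  rcases eq_or_ne (k : ℕ) (l : ℕ) with h | h
  · simp [h]
  · have h1 : ¬(2 * (k:ℕ) = 2 * (l:ℕ)) := by omega
    have h2 : ¬(2 * (k:ℕ) = 2 * (l:ℕ) + 1) := by omega
    simp [h1, h2, h]

lemma Uf_dbl1 {n : ℕ} (k l : Fin (2 ^ n)) :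
    Ufmat n (dblFin1 k) l = if k = l then -r2 else 0 := by
  simp only [Ufmat, dblFin1, Fin.ext_iff]
  rcases eq_or_ne (k : ℕ) (l : ℕ) with h | h
  · have h1 : ¬(2 * (k:ℕ) + 1 = 2 * (l:ℕ)) := by omega
    simp [h, h1]
  · have h1 : ¬(2 * (k:ℕ) + 1 = 2 * (l:ℕ)) := by omega
    have h2 : ¬(2 * (k:ℕ) + 1 = 2 * (l:ℕ) + 1) := by omega
    simp [h1, h2, h]

section prods
variable {α : Type*} {n : ℕ}

lemma mul_Ue_apply (X : Matrix α (Fin (2 ^ (n + 1))) ℝ) (a : α) (l : Fin (2 ^ n)) :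
    (X * Uemat n) a l = r2 * (X a (dblFin l) + X a (dblFin1 l)) := by
  rw [Matrix.mul_apply, sum_fin_double (fun j => X a j * Uemat n j l)]
  rw [Finset.sum_eq_single l]
  · simp [Ue_dbl, Ue_dbl1]; ring
  · intro b _ hb
    simp [Ue_dbl, Ue_dbl1, hb]
  · simp

lemma mul_Uf_apply (X : Matrix α (Fin (2 ^ (n + 1))) ℝ) (a : α) (l : Fin (2 ^ n)) :
    (X * Ufmat n) a l = r2 * (X a (dblFin l) - X a (dblFin1 l)) := by
  rw [Matrix.mul_apply, sum_fin_double (fun j => X a j * Ufmat n j l)]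
  rw [Finset.sum_eq_single l]
  · simp [Uf_dbl, Uf_dbl1]; ring
  · intro b _ hb
    simp [Uf_dbl, Uf_dbl1, hb]
  · simp

lemma Uet_mul_apply (X : Matrix (Fin (2 ^ (n + 1))) α ℝ) (k : Fin (2 ^ n)) (a : α) :
    ((Uemat n)ᵀ * X) k a = r2 * (X (dblFin k) a + X (dblFin1 k) a) := by
  rw [Matrix.mul_apply, sum_fin_double (fun j => (Uemat n)ᵀ k j * X j a)]
  simp only [Matrix.transpose_apply]
  rw [Finset.sum_eq_single k]
  · simp [Ue_dbl, Ue_dbl1]; ring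
  · intro b _ hb
    simp [Ue_dbl, Ue_dbl1, hb]
  · simp

lemma Uft_mul_apply (X : Matrix (Fin (2 ^ (n + 1))) α ℝ) (k : Fin (2 ^ n)) (a : α) :
    ((Ufmat n)ᵀ * X) k a = r2 * (X (dblFin k) a - X (dblFin1 k) a) := by
  rw [Matrix.mul_apply, sum_fin_double (fun j => (Ufmat n)ᵀ k j * X j a)]
  simp only [Matrix.transpose_apply]
  rw [Finset.sum_eq_single k]
  · simp [Uf_dbl, Uf_dbl1]; ring
  · intro b _ hb
    simp [Uf_dbl, Uf_dbl1, hb]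
  · simp

end prods

lemma UetUe (n : ℕ) : (Uemat n)ᵀ * Uemat n = 1 := by
  ext k l
  rw [Uet_mul_apply, Ue_dbl, Ue_dbl1, Matrix.one_apply]
  rcases eq_or_ne k l with rfl | h
  · norm_num [mul_add, r2_mul_r2]
  · simp [h]

lemma UetUf (n : ℕ) : (Uemat n)ᵀ * Ufmat n = 0 := by
  ext k l
  rw [Uet_mul_apply, Uf_dbl, Uf_dbl1]
  rcases eq_or_ne k l with rfl | h
  · simp
  · simp [h]

lemma UftUe (n : ℕ) : (Ufmat n)ᵀ * Uemat n = 0 := by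
  ext k l
  rw [Uft_mul_apply, Ue_dbl, Ue_dbl1]
  rcases eq_or_ne k l with rfl | h
  · simp
  · simp [h]

lemma UftUf (n : ℕ) : (Ufmat n)ᵀ * Ufmat n = 1 := by
  ext k l
  rw [Uft_mul_apply, Uf_dbl, Uf_dbl1, Matrix.one_apply]
  rcases eq_or_ne k l with rfl | h
  · norm_num [sub_neg_eq_add, mul_add, r2_mul_r2]
  · simp [h]

lemma UtU (n : ℕ) : (Umat n)ᵀ * Umat n = 1 := by
  rw [Umat, Matrix.transpose_fromCols, Matrix.fromRows_mul_fromCols,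
    UetUe, UetUf, UftUe, UftUf, Matrix.fromBlocks_one]

lemma UUt (n : ℕ) : Umat n * (Umat n)ᵀ = 1 := by
  have e : Fin (2 ^ (n + 1)) ≃ Fin (2 ^ n) ⊕ Fin (2 ^ n) :=
    (finCongr (by rw [pow_succ]; omega)).trans (finSumFinEquiv).symm
  rw [Umat, Matrix.transpose_fromCols]
  rw [Matrix.fromCols_mul_fromRows_eq_one_comm e]
  rw [Matrix.fromRows_mul_fromCols, UetUe, UetUf, UftUe, UftUf, Matrix.fromBlocks_one]

end
noncomputable section
open Finset

/-- `∑_{r=1}^n p_r 2^{-r}` -/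
def csum (p : ℕ → ℝ) (n : ℕ) : ℝ := ∑ r ∈ Finset.Icc 1 n, p r / 2 ^ r

lemma sum_Icc_zero (f : ℕ → ℝ) (m : ℕ) :
    ∑ r ∈ Finset.Icc 0 m, f r = f 0 + ∑ r ∈ Finset.Icc 1 m, f r := by
  have h : Finset.Icc 0 m = insert 0 (Finset.Icc 1 m) := by
    ext r; simp only [Finset.mem_Icc, Finset.mem_insert]; omega
  rw [h, Finset.sum_insert (by simp)]

lemma sum_Icc_shift (f : ℕ → ℝ) (n : ℕ) (hn : 1 ≤ n) :
    ∑ r ∈ Finset.Icc 1 n, f r = ∑ s ∈ Finset.Icc 0 (n - 1), f (1 + s) := by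
  have h : Finset.Icc 1 n = (Finset.Icc 0 (n - 1)).map (addLeftEmbedding 1) := by
    rw [Finset.map_add_left_Icc]; congr 1; omega
  rw [h, Finset.sum_map]; rfl

lemma lap_le_one {p : ℕ → ℝ} {n : ℕ} {j j' : ℕ} (h : hdist j j' ≤ 1) :
    lapEntryT p n j j' = csum p n := by
  unfold lapEntryT csum
  refine Finset.sum_congr rfl fun r hr => ?_
  rw [Finset.mem_Icc] at hr
  rw [if_pos (le_trans h hr.1)]

lemma lap_diag {p : ℕ → ℝ} {n : ℕ} {j : ℕ} : lapEntryT p n j j = csum p n :=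
  lap_le_one (by rw [hdist_self]; omega)

lemma csum_succ {p : ℕ → ℝ} {n : ℕ} (hn : 1 ≤ n) :
    2 * csum p n = p 1 + csum (shiftSeq p) (n - 1) := by
  unfold csum
  rw [sum_Icc_shift _ n hn, Finset.mul_sum, sum_Icc_zero]
  have h0 : 2 * (p (1 + 0) / 2 ^ (1 + 0)) = p 1 := by norm_num; ring
  rw [h0]
  congr 1
  refine Finset.sum_congr rfl fun s hs => ?_
  have h2 : (2:ℝ) ^ (1 + s) = 2 * 2 ^ s := by rw [pow_add]; ring
  rw [h2, shiftSeq]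
  have hs2 : (2:ℝ) ^ s ≠ 0 := by positivity
  rw [show s + 1 = 1 + s by omega]
  field_simp

lemma lap_children_ne {p : ℕ → ℝ} {n k l i i' : ℕ} (hn : 1 ≤ n) (hi : i < 2) (hi' : i' < 2)
    (hkl : k ≠ l) :
    lapEntryT p n (2 * k + i) (2 * l + i') = 1 / 2 * lapEntryT (shiftSeq p) (n - 1) k l := by
  unfold lapEntryT
  rw [sum_Icc_shift _ n hn, sum_Icc_zero]
  have hd := hdist_children (k := k) (l := l) hi hi' hkl
  have h0 : (if hdist (2 * k + i) (2 * l + i') ≤ 1 + 0 then p (1 + 0) / 2 ^ (1 + 0) else 0) = 0 := by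
    rw [if_neg]; rw [hd]; have := hdist_pos hkl; omega
  rw [h0, zero_add, Finset.mul_sum]
  refine Finset.sum_congr rfl fun s hs => ?_
  rw [hd]
  have hcond : (hdist k l + 1 ≤ 1 + s) ↔ (hdist k l ≤ s) := by omega
  have h2 : (2:ℝ) ^ (1 + s) = 2 * 2 ^ s := by rw [pow_add]; ring
  simp only [hcond, h2, shiftSeq, show s + 1 = 1 + s from by omega]
  split_ifs with h
  · have hs2 : (2:ℝ) ^ s ≠ 0 := by positivity
    field_simp
  · ring
noncomputable section
open Finset

/-- arithmetic-mean renormalized potential -/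
def wAvg (p : ℕ → ℝ) (v : ℕ → ℝ) : ℕ → ℝ :=
  fun k => (v (2 * k) + v (2 * k + 1)) / 2 + p 1

lemma dblFin_val {n : ℕ} (k : Fin (2 ^ n)) : ((dblFin k : Fin (2 ^ (n+1))) : ℕ) = 2 * k := rfl
lemma dblFin1_val {n : ℕ} (k : Fin (2 ^ n)) : ((dblFin1 k : Fin (2 ^ (n+1))) : ℕ) = 2 * k + 1 := rfl

lemma Msub_apply (p : ℕ → ℝ) (v : ℕ → ℝ) (n m : ℕ) (t : ℝ) (j k : Fin (2 ^ n)) :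
    (HmatT p v n m - t • (1 : Matrix (Fin (2 ^ n)) (Fin (2 ^ n)) ℝ)) j k =
      lapEntryT p m j k + (if j = k then v j - t else 0) := by
  simp only [Matrix.sub_apply, Matrix.smul_apply, Matrix.one_apply, HmatT, smul_eq_mul, mul_ite,
    mul_one, mul_zero]
  split_ifs <;> ring

lemma Msub_apply_eq (p : ℕ → ℝ) (v : ℕ → ℝ) (n m : ℕ) (t : ℝ) (j : Fin (2 ^ n)) :
    (HmatT p v n m - t • (1 : Matrix (Fin (2 ^ n)) (Fin (2 ^ n)) ℝ)) j j =
      lapEntryT p m j j + (v j - t) := by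
  rw [Msub_apply, if_pos rfl]

lemma Msub_apply_ne (p : ℕ → ℝ) (v : ℕ → ℝ) (n m : ℕ) (t : ℝ) {j k : Fin (2 ^ n)} (h : j ≠ k) :
    (HmatT p v n m - t • (1 : Matrix (Fin (2 ^ n)) (Fin (2 ^ n)) ℝ)) j k =
      lapEntryT p m j k := by
  rw [Msub_apply, if_neg h, add_zero]

section blocks
variable {p : ℕ → ℝ} {v : ℕ → ℝ} {n : ℕ} {t : ℝ}

lemma block_ee (hn : 1 ≤ n) :
    (Uemat n)ᵀ * (HmatT p v (n + 1) n - t • 1) * Uemat n =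
      HmatT (shiftSeq p) (wAvg p v) n (n - 1) - t • 1 := by
  ext k l
  rw [mul_Ue_apply, Uet_mul_apply, Uet_mul_apply]
  rw [Msub_apply, Msub_apply, Msub_apply, Msub_apply, Msub_apply]
  simp only [dblFin_val, dblFin1_val]
  rcases eq_or_ne k l with rfl | hkl
  · have e1 : lapEntryT p n (2*(k:ℕ)) (2*(k:ℕ)) = csum p n := lap_diag
    have e2 : lapEntryT p n (2*(k:ℕ)+1) (2*(k:ℕ)) = csum p n := by
      refine lap_le_one ?_
      have := hdist_sib (k := (k:ℕ)) (i := 1) (i' := 0) (by omega) (by omega)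
      simpa using this
    have e3 : lapEntryT p n (2*(k:ℕ)) (2*(k:ℕ)+1) = csum p n := by
      refine lap_le_one ?_
      have := hdist_sib (k := (k:ℕ)) (i := 0) (i' := 1) (by omega) (by omega)
      simpa using this
    have e4 : lapEntryT p n (2*(k:ℕ)+1) (2*(k:ℕ)+1) = csum p n := lap_diag
    have e5 : lapEntryT (shiftSeq p) (n-1) (k:ℕ) (k:ℕ) = csum (shiftSeq p) (n-1) := lap_diag
    rw [e1, e2, e3, e4, e5]
    simp only [wAvg, eq_self_iff_true, if_true, if_neg (dblFin_ne_dblFin1 k k),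
      if_neg (Ne.symm (dblFin_ne_dblFin1 k k))]
    have hcs := csum_succ (p := p) hn
    linear_combination (4 * csum p n + v (2*(k:ℕ)) + v (2*(k:ℕ)+1) - 2*t) * r2_mul_r2 + hcs
  · have hklv : (k : ℕ) ≠ (l : ℕ) := fun h => hkl (Fin.ext h)
    have e1 := lap_children_ne (p := p) (n := n) (k := (k:ℕ)) (l := (l:ℕ)) (i := 0) (i' := 0)
      hn (by omega) (by omega) hklv
    have e2 := lap_children_ne (p := p) (n := n) (k := (k:ℕ)) (l := (l:ℕ)) (i := 1) (i' := 0)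
      hn (by omega) (by omega) hklv
    have e3 := lap_children_ne (p := p) (n := n) (k := (k:ℕ)) (l := (l:ℕ)) (i := 0) (i' := 1)
      hn (by omega) (by omega) hklv
    have e4 := lap_children_ne (p := p) (n := n) (k := (k:ℕ)) (l := (l:ℕ)) (i := 1) (i' := 1)
      hn (by omega) (by omega) hklv
    simp only [Nat.add_zero] at e1 e2 e3 e4
    rw [e1, e2, e3, e4]
    have hd1 : dblFin k ≠ dblFin l := fun h => hkl ((dblFin_inj_iff k l).mp h)
    have hd2 : dblFin1 k ≠ dblFin1 l := fun h => hkl ((dblFin1_inj_iff k l).mp h)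
    simp only [if_neg hd1, if_neg hd2, if_neg (dblFin_ne_dblFin1 k l),
      if_neg (Ne.symm (dblFin_ne_dblFin1 l k)), if_neg hkl]
    linear_combination (2 * lapEntryT (shiftSeq p) (n-1) (k:ℕ) (l:ℕ)) * r2_mul_r2

lemma block_ef (hn : 1 ≤ n) :
    (Uemat n)ᵀ * (HmatT p v (n + 1) n - t • 1) * Ufmat n = Vfemat v n := by
  ext k l
  rw [mul_Uf_apply, Uet_mul_apply, Uet_mul_apply]
  rw [Msub_apply, Msub_apply, Msub_apply, Msub_apply]
  simp only [dblFin_val, dblFin1_val, Vfemat, Matrix.diagonal_apply]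
  rcases eq_or_ne k l with rfl | hkl
  · have e1 : lapEntryT p n (2*(k:ℕ)) (2*(k:ℕ)) = csum p n := lap_diag
    have e2 : lapEntryT p n (2*(k:ℕ)+1) (2*(k:ℕ)) = csum p n := by
      refine lap_le_one ?_
      have := hdist_sib (k := (k:ℕ)) (i := 1) (i' := 0) (by omega) (by omega)
      simpa using this
    have e3 : lapEntryT p n (2*(k:ℕ)) (2*(k:ℕ)+1) = csum p n := by
      refine lap_le_one ?_
      have := hdist_sib (k := (k:ℕ)) (i := 0) (i' := 1) (by omega) (by omega)
      simpa using this
    have e4 : lapEntryT p n (2*(k:ℕ)+1) (2*(k:ℕ)+1) = csum p n := lap_diag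
    rw [e1, e2, e3, e4]
    simp only [eq_self_iff_true, if_true, if_neg (dblFin_ne_dblFin1 k k),
      if_neg (Ne.symm (dblFin_ne_dblFin1 k k))]
    linear_combination (v (2*(k:ℕ)) - v (2*(k:ℕ)+1)) * r2_mul_r2
  · have hklv : (k : ℕ) ≠ (l : ℕ) := fun h => hkl (Fin.ext h)
    have e1 := lap_children_ne (p := p) (n := n) (k := (k:ℕ)) (l := (l:ℕ)) (i := 0) (i' := 0)
      hn (by omega) (by omega) hklv
    have e2 := lap_children_ne (p := p) (n := n) (k := (k:ℕ)) (l := (l:ℕ)) (i := 1) (i' := 0)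
      hn (by omega) (by omega) hklv
    have e3 := lap_children_ne (p := p) (n := n) (k := (k:ℕ)) (l := (l:ℕ)) (i := 0) (i' := 1)
      hn (by omega) (by omega) hklv
    have e4 := lap_children_ne (p := p) (n := n) (k := (k:ℕ)) (l := (l:ℕ)) (i := 1) (i' := 1)
      hn (by omega) (by omega) hklv
    simp only [Nat.add_zero] at e1 e2 e3 e4
    rw [e1, e2, e3, e4]
    have hd1 : dblFin k ≠ dblFin l := fun h => hkl ((dblFin_inj_iff k l).mp h)
    have hd2 : dblFin1 k ≠ dblFin1 l := fun h => hkl ((dblFin1_inj_iff k l).mp h)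
    simp only [if_neg hd1, if_neg hd2, if_neg (dblFin_ne_dblFin1 k l),
      if_neg (Ne.symm (dblFin_ne_dblFin1 l k)), if_neg hkl]
    ring

lemma block_ff (hn : 1 ≤ n) :
    (Ufmat n)ᵀ * (HmatT p v (n + 1) n - t • 1) * Ufmat n = Vffmat v n - t • 1 := by
  ext k l
  rw [mul_Uf_apply, Uft_mul_apply, Uft_mul_apply]
  rw [Msub_apply, Msub_apply, Msub_apply, Msub_apply]
  simp only [dblFin_val, dblFin1_val, Vffmat, Matrix.sub_apply, Matrix.smul_apply,
    Matrix.one_apply, Matrix.diagonal_apply, smul_eq_mul, mul_ite, mul_one, mul_zero]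
  rcases eq_or_ne k l with rfl | hkl
  · have e1 : lapEntryT p n (2*(k:ℕ)) (2*(k:ℕ)) = csum p n := lap_diag
    have e2 : lapEntryT p n (2*(k:ℕ)+1) (2*(k:ℕ)) = csum p n := by
      refine lap_le_one ?_
      have := hdist_sib (k := (k:ℕ)) (i := 1) (i' := 0) (by omega) (by omega)
      simpa using this
    have e3 : lapEntryT p n (2*(k:ℕ)) (2*(k:ℕ)+1) = csum p n := by
      refine lap_le_one ?_
      have := hdist_sib (k := (k:ℕ)) (i := 0) (i' := 1) (by omega) (by omega)
      simpa using this
    have e4 : lapEntryT p n (2*(k:ℕ)+1) (2*(k:ℕ)+1) = csum p n := lap_diag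
    rw [e1, e2, e3, e4]
    simp only [eq_self_iff_true, if_true, if_neg (dblFin_ne_dblFin1 k k),
      if_neg (Ne.symm (dblFin_ne_dblFin1 k k))]
    linear_combination (v (2*(k:ℕ)) + v (2*(k:ℕ)+1) - 2*t) * r2_mul_r2
  · have hklv : (k : ℕ) ≠ (l : ℕ) := fun h => hkl (Fin.ext h)
    have e1 := lap_children_ne (p := p) (n := n) (k := (k:ℕ)) (l := (l:ℕ)) (i := 0) (i' := 0)
      hn (by omega) (by omega) hklv
    have e2 := lap_children_ne (p := p) (n := n) (k := (k:ℕ)) (l := (l:ℕ)) (i := 1) (i' := 0)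
      hn (by omega) (by omega) hklv
    have e3 := lap_children_ne (p := p) (n := n) (k := (k:ℕ)) (l := (l:ℕ)) (i := 0) (i' := 1)
      hn (by omega) (by omega) hklv
    have e4 := lap_children_ne (p := p) (n := n) (k := (k:ℕ)) (l := (l:ℕ)) (i := 1) (i' := 1)
      hn (by omega) (by omega) hklv
    simp only [Nat.add_zero] at e1 e2 e3 e4
    rw [e1, e2, e3, e4]
    have hd1 : dblFin k ≠ dblFin l := fun h => hkl ((dblFin_inj_iff k l).mp h)
    have hd2 : dblFin1 k ≠ dblFin1 l := fun h => hkl ((dblFin1_inj_iff k l).mp h)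
    simp only [if_neg hd1, if_neg hd2, if_neg (dblFin_ne_dblFin1 k l),
      if_neg (Ne.symm (dblFin_ne_dblFin1 l k)), if_neg hkl]
    ring

lemma block_fe (hn : 1 ≤ n) :
    (Ufmat n)ᵀ * (HmatT p v (n + 1) n - t • 1) * Uemat n = Vfemat v n := by
  have hM : (HmatT p v (n + 1) n - t • (1 : Matrix (Fin (2^(n+1))) (Fin (2^(n+1))) ℝ))ᵀ
      = HmatT p v (n + 1) n - t • 1 := by
    ext j k
    simp only [Matrix.transpose_apply, Matrix.sub_apply, Matrix.smul_apply, Matrix.one_apply,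
      HmatT, lapEntryT, hdist_comm (k : ℕ) (j : ℕ)]
    rcases eq_or_ne j k with rfl | h
    · rfl
    · simp [h, h.symm]
  have := congrArg Matrix.transpose (block_ef (p := p) (v := v) (t := t) hn)
  rw [Matrix.transpose_mul, Matrix.transpose_mul, Matrix.transpose_transpose, hM] at this
  rw [← Matrix.mul_assoc] at this
  rw [this]
  ext k l
  simp only [Vfemat, Matrix.transpose_apply, Matrix.diagonal_apply]
  rcases eq_or_ne k l with rfl | h
  · simp
  · simp [h, Ne.symm h]

lemma key_block (hn : 1 ≤ n) :
    (Umat n)ᵀ * (HmatT p v (n + 1) n - t • 1) * Umat n =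
      Matrix.fromBlocks (HmatT (shiftSeq p) (wAvg p v) n (n - 1) - t • 1) (Vfemat v n)
        (Vfemat v n) (Vffmat v n - t • 1) := by
  rw [Umat, Matrix.transpose_fromCols, Matrix.fromRows_mul, Matrix.fromRows_mul_fromCols,
    block_ee hn, block_ef hn, block_fe hn, block_ff hn]

end blocks
end
noncomputable section
open Finset

lemma renIter_zero (p : ℕ → ℝ) (x : ℕ → ℝ) (k : ℕ) : renIter p 0 x k = x k := rfl

lemma renIter_succ (p : ℕ → ℝ) (j : ℕ) (x : ℕ → ℝ) (k : ℕ) :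
    renIter p (j + 1) x k =
      (1 / (2 * renIter p j x (2 * k)) + 1 / (2 * renIter p j x (2 * k + 1)))⁻¹ + p (j + 1) := rfl

lemma renIter_comp (p : ℕ → ℝ) (x : ℕ → ℝ) :
    ∀ n k, renIter (shiftSeq p) n (renIter p 1 x) k = renIter p (n + 1) x k := by
  intro n
  induction n with
  | zero => intro k; rfl
  | succ n ih =>
      intro k
      rw [renIter_succ, renIter_succ, ih, ih, shiftSeq]

lemma renIter_congr (p : ℕ → ℝ) :
    ∀ (j : ℕ) (x y : ℕ → ℝ) (i : ℕ),
      (∀ m, i * 2 ^ j ≤ m → m < (i + 1) * 2 ^ j → x m = y m) →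
      renIter p j x i = renIter p j y i := by
  intro j
  induction j with
  | zero => intro x y i h; exact h i (by simp) (by simp)
  | succ j ih =>
      intro x y i h
      rw [renIter_succ, renIter_succ]
      have h1 : renIter p j x (2 * i) = renIter p j y (2 * i) := by
        refine ih x y (2 * i) fun m hm1 hm2 => h m ?_ ?_
        · calc i * 2 ^ (j + 1) = 2 * i * 2 ^ j := by ring
            _ ≤ m := hm1
        · calc m < (2 * i + 1) * 2 ^ j := hm2
            _ ≤ (i + 1) * 2 ^ (j + 1) := by
              have : (1:ℕ) ≤ 2 ^ j := Nat.one_le_two_pow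
              rw [pow_succ]
              nlinarith
      have h2 : renIter p j x (2 * i + 1) = renIter p j y (2 * i + 1) := by
        refine ih x y (2 * i + 1) fun m hm1 hm2 => h m ?_ ?_
        · calc i * 2 ^ (j + 1) = 2 * i * 2 ^ j := by ring
            _ ≤ (2 * i + 1) * 2 ^ j := by nlinarith [Nat.one_le_two_pow (n := j)]
            _ ≤ m := hm1
        · calc m < (2 * i + 1 + 1) * 2 ^ j := hm2
            _ ≤ (i + 1) * 2 ^ (j + 1) := by
              have : (1:ℕ) ≤ 2 ^ j := Nat.one_le_two_pow
              rw [pow_succ]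
              nlinarith
      rw [h1, h2]

lemma renIter_measurable (p : ℕ → ℝ) :
    ∀ (j i : ℕ), Measurable fun x : ℕ → ℝ => renIter p j x i := by
  intro j
  induction j with
  | zero => intro i; exact measurable_pi_apply i
  | succ j ih =>
      intro i
      simp only [renIter_succ]
      refine Measurable.add_const ?_ _
      refine Measurable.inv ?_
      have m1 : Measurable fun x : ℕ → ℝ => 1 / (2 * renIter p j x (2 * i)) := by
        simp only [one_div]
        exact ((ih (2 * i)).const_mul 2).inv
      have m2 : Measurable fun x : ℕ → ℝ => 1 / (2 * renIter p j x (2 * i + 1)) := by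
        simp only [one_div]
        exact ((ih (2 * i + 1)).const_mul 2).inv
      exact m1.add m2

/-- conjugation by an orthogonal rectangular matrix commutes with inversion -/
lemma conjInvMat {α β : Type*} [Fintype α] [Fintype β] [DecidableEq α] [DecidableEq β]
    (U : Matrix α β ℝ) (N : Matrix β β ℝ) (hU1 : U * Uᵀ = 1) (hU2 : Uᵀ * U = 1) :
    (U * N * Uᵀ)⁻¹ = U * N⁻¹ * Uᵀ := by
  by_cases hN : IsUnit N.det
  · have hNi := Matrix.mul_nonsing_inv N hN
    have hNi' := Matrix.nonsing_inv_mul N hN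
    apply Matrix.inv_eq_right_inv
    calc U * N * Uᵀ * (U * N⁻¹ * Uᵀ) = U * N * (Uᵀ * U) * N⁻¹ * Uᵀ := by
          simp only [Matrix.mul_assoc]
      _ = U * (N * N⁻¹) * Uᵀ := by rw [hU2]; simp only [Matrix.mul_one, Matrix.mul_assoc]
      _ = 1 := by rw [hNi, Matrix.mul_one, hU1]
  · have hM : ¬IsUnit (U * N * Uᵀ).det := by
      intro hM
      apply hN
      have hMi := Matrix.mul_nonsing_inv _ hM
      have : N * (Uᵀ * (U * N * Uᵀ)⁻¹ * U) = 1 := by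
        calc N * (Uᵀ * (U * N * Uᵀ)⁻¹ * U)
            = (Uᵀ * U) * N * (Uᵀ * (U * N * Uᵀ)⁻¹ * U) := by rw [hU2, Matrix.one_mul]
          _ = Uᵀ * ((U * N * Uᵀ) * (U * N * Uᵀ)⁻¹) * U := by simp only [Matrix.mul_assoc]
          _ = Uᵀ * U := by rw [hMi, Matrix.mul_one]
          _ = 1 := hU2
      exact Matrix.isUnit_det_of_right_inverse this
    rw [Matrix.nonsing_inv_apply_not_isUnit _ hM, Matrix.nonsing_inv_apply_not_isUnit _ hN]
    simp

lemma phi_transform (n : ℕ) :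
    (Umat n)ᵀ.mulVec (phiVec (n + 1)) = Sum.elim (phiVec n) 0 := by
  have hsq : Real.sqrt (2 ^ (n + 1)) = Real.sqrt 2 * Real.sqrt (2 ^ n) := by
    rw [pow_succ, mul_comm, Real.sqrt_mul (by norm_num)]
  have h2 : (0:ℝ) < Real.sqrt 2 := Real.sqrt_pos.mpr (by norm_num)
  have h2n : (0:ℝ) < Real.sqrt (2 ^ n) := Real.sqrt_pos.mpr (by positivity)
  ext (k | k)
  · simp only [Sum.elim_inl, Matrix.mulVec, dotProduct, Umat, Matrix.transpose_apply,
      Matrix.fromCols_apply_inl]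
    rw [sum_fin_double (fun j => Uemat n j k * phiVec (n + 1) j)]
    rw [Finset.sum_eq_single k]
    · simp only [Ue_dbl, Ue_dbl1, if_pos rfl, phiVec, hsq, eq_self_iff_true, if_true]
      rw [mul_inv]
      field_simp
      have hss : Real.sqrt 2 * Real.sqrt 2 = 2 := Real.mul_self_sqrt (by norm_num)
      linear_combination (-1 : ℝ) * hss
    · intro b _ hb
      simp [Ue_dbl, Ue_dbl1, hb]
    · simp
  · simp only [Sum.elim_inr, Matrix.mulVec, dotProduct, Umat, Matrix.transpose_apply,
      Matrix.fromCols_apply_inr]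
    rw [sum_fin_double (fun j => Ufmat n j k * phiVec (n + 1) j)]
    rw [Finset.sum_eq_single k]
    · simp only [Uf_dbl, Uf_dbl1, if_pos rfl, phiVec, Pi.zero_apply, eq_self_iff_true, if_true]
      ring
    · intro b _ hb
      simp [Uf_dbl, Uf_dbl1, hb]
    · simp
end
noncomputable section
open Finset

/-- Genericity ("good") condition on the potential, ensuring all inverses exist. -/
def Good (p : ℕ → ℝ) : ℕ → (ℕ → ℝ) → Prop
  | 0, _ => True
  | 1, x => x 0 ≠ 0 ∧ x 1 ≠ 0
  | (n + 2), x => (∀ j < 2 ^ (n + 2), x j ≠ 0) ∧ (∀ k < 2 ^ (n + 1), x (2 * k) + x (2 * k + 1) ≠ 0)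
      ∧ Good (shiftSeq p) (n + 1) (renIter p 1 x)

lemma inv_diagonal' {m : Type*} [Fintype m] [DecidableEq m] (d : m → ℝ) (hd : ∀ j, d j ≠ 0) :
    (Matrix.diagonal d)⁻¹ = Matrix.diagonal (fun j => (d j)⁻¹) := by
  apply Matrix.inv_eq_right_inv
  rw [Matrix.diagonal_mul_diagonal]
  have h : (fun j => d j * (d j)⁻¹) = fun _ => (1:ℝ) := funext fun j => mul_inv_cancel₀ (hd j)
  rw [h, Matrix.diagonal_one]

lemma schur_scalar {x0 x1 p1 : ℝ} (h0 : x0 ≠ 0) (h1 : x1 ≠ 0) (hs : x0 + x1 ≠ 0) :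
    ((x0 + x1) / 2 + p1) - (x0 - x1) / 2 * ((x0 + x1) / 2)⁻¹ * ((x0 - x1) / 2)
      = (1 / (2 * x0) + 1 / (2 * x1))⁻¹ + p1 := by
  have hh : 1 / (2 * x0) + 1 / (2 * x1) = (x0 + x1) / (2 * x0 * x1) := by
    field_simp; ring
  rw [hh]
  have h2 : ((x0 + x1) / (2 * x0 * x1))⁻¹ = (2 * x0 * x1) / (x0 + x1) := by
    rw [inv_div]
  rw [h2]
  field_simp
  ring

theorem F_eq (n : ℕ) : ∀ (p : ℕ → ℝ) (t : ℝ) (v : ℕ → ℝ),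
    Good p (n + 1) (fun k => v k - t) →
    phiVec (n + 1) ⬝ᵥ (HmatT p v (n + 1) n -
        t • (1 : Matrix (Fin (2 ^ (n + 1))) (Fin (2 ^ (n + 1))) ℝ))⁻¹.mulVec (phiVec (n + 1))
      = (renIter p (n + 1) (fun k => v k - t) 0 - p (n + 1))⁻¹ := by
  induction n with
  | zero =>
      intro p t v hg
      simp only [Good] at hg
      obtain ⟨h0, h1⟩ := hg
      show phiVec 1 ⬝ᵥ (HmatT p v 1 0 -
          t • (1 : Matrix (Fin (2 ^ 1)) (Fin (2 ^ 1)) ℝ))⁻¹.mulVec (phiVec 1)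
        = (renIter p 1 (fun k => v k - t) 0 - p 1)⁻¹
      have hdiag : HmatT p v 1 0 - t • (1 : Matrix (Fin (2 ^ 1)) (Fin (2 ^ 1)) ℝ)
          = Matrix.diagonal (fun j : Fin (2 ^ 1) => v j - t) := by
        ext j k
        rw [Msub_apply]
        have hlap : lapEntryT p 0 (j : ℕ) (k : ℕ) = 0 := by
          unfold lapEntryT
          rw [show Finset.Icc 1 0 = ∅ from by simp]
          simp
        rw [hlap, zero_add, Matrix.diagonal_apply]
      have hd : ∀ j : Fin (2 ^ 1), v (j : ℕ) - t ≠ 0 := by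
        intro j
        have hj := j.isLt
        interval_cases h : (j : ℕ)
        · exact h0
        · exact h1
      rw [hdiag, inv_diagonal' _ hd]
      have hsum : phiVec 1 ⬝ᵥ (Matrix.diagonal
            (fun j : Fin (2 ^ 1) => (v (j : ℕ) - t)⁻¹)).mulVec (phiVec 1)
          = phiVec 1 0 * (Matrix.diagonal
              (fun j : Fin (2 ^ 1) => (v (j : ℕ) - t)⁻¹)).mulVec (phiVec 1) 0
            + phiVec 1 1 * (Matrix.diagonal
              (fun j : Fin (2 ^ 1) => (v (j : ℕ) - t)⁻¹)).mulVec (phiVec 1) 1 :=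
        Fin.sum_univ_two
          (f := fun j : Fin 2 => phiVec 1 j * (Matrix.diagonal
            (fun j : Fin (2 ^ 1) => (v (j : ℕ) - t)⁻¹)).mulVec (phiVec 1) j)
      rw [hsum]
      simp only [Matrix.mulVec_diagonal, phiVec]
      have hre : renIter p 1 (fun k => v k - t) 0 - p 1
          = (1 / (2 * (v 0 - t)) + 1 / (2 * (v 1 - t)))⁻¹ := by
        rw [renIter_succ]
        simp [renIter_zero]
      rw [hre, inv_inv]
      have hs2 : Real.sqrt (2 ^ 1) * Real.sqrt (2 ^ 1) = 2 := by
        rw [Real.mul_self_sqrt (by norm_num)]; norm_num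
      have hcc : (Real.sqrt (2 ^ 1))⁻¹ * (Real.sqrt (2 ^ 1))⁻¹ = (2:ℝ)⁻¹ := by
        rw [← mul_inv, hs2]
      have hv0 : (((0 : Fin (2 ^ 1))) : ℕ) = 0 := rfl
      have hv1 : (((1 : Fin (2 ^ 1))) : ℕ) = 1 := rfl
      rw [hv0, hv1]
      simp only [one_div, mul_inv]
      linear_combination ((v 0 - t)⁻¹ + (v 1 - t)⁻¹) * hcc
  | succ n ih =>
      intro p t v hg
      simp only [Good] at hg
      obtain ⟨hx, hsum, hrec⟩ := hg
      set x : ℕ → ℝ := fun k => v k - t with hxdef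
      set M := HmatT p v (n + 1 + 1) (n + 1) -
        t • (1 : Matrix (Fin (2 ^ (n + 1 + 1))) (Fin (2 ^ (n + 1 + 1))) ℝ) with hM
      set A := HmatT (shiftSeq p) (wAvg p v) (n + 1) n -
        t • (1 : Matrix (Fin (2 ^ (n + 1))) (Fin (2 ^ (n + 1))) ℝ) with hA
      set B := Vfemat v (n + 1) with hB
      set D := Vffmat v (n + 1) - t • (1 : Matrix (Fin (2 ^ (n + 1))) (Fin (2 ^ (n + 1))) ℝ)
        with hD
      set NN := Matrix.fromBlocks A B B D with hNN
      have hkb : (Umat (n+1))ᵀ * M * Umat (n+1) = NN := key_block (by omega)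
      have hDdiag : D = Matrix.diagonal (fun k : Fin (2 ^ (n + 1)) =>
          (x (2 * k) + x (2 * k + 1)) / 2) := by
        ext j k
        simp only [hD, Vffmat, Matrix.sub_apply, Matrix.smul_apply, Matrix.one_apply,
          Matrix.diagonal_apply, smul_eq_mul, mul_ite, mul_one, mul_zero, hxdef]
        rcases eq_or_ne j k with rfl | h
        · simp; ring
        · simp [h]
      have hDd : ∀ k : Fin (2 ^ (n + 1)), (x (2 * (k : ℕ)) + x (2 * (k : ℕ) + 1)) / 2 ≠ 0 := by
        intro k hc
        have h2 : x (2 * (k:ℕ)) + x (2 * (k:ℕ) + 1) = 0 :=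
          (div_eq_zero_iff.mp hc).resolve_right (by norm_num)
        exact hsum (k : ℕ) k.isLt h2
      have hDdet : IsUnit D.det := by
        rw [hDdiag, Matrix.det_diagonal]
        rw [isUnit_iff_ne_zero]
        exact Finset.prod_ne_zero_iff.mpr fun k _ => hDd k
      haveI iD : Invertible D := D.invertibleOfIsUnitDet hDdet
      have hinvOfD : ⅟D = D⁻¹ := Matrix.invOf_eq_nonsing_inv D
      have hMU : M = Umat (n+1) * NN * (Umat (n+1))ᵀ := by
        rw [← hkb]
        calc M = (Umat (n+1) * (Umat (n+1))ᵀ) * M * (Umat (n+1) * (Umat (n+1))ᵀ) := by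
              rw [UUt]; simp only [Matrix.one_mul, Matrix.mul_one]
          _ = Umat (n+1) * ((Umat (n+1))ᵀ * M * Umat (n+1)) * (Umat (n+1))ᵀ := by
              simp only [Matrix.mul_assoc]
      have hMinv : M⁻¹ = Umat (n+1) * NN⁻¹ * (Umat (n+1))ᵀ := by
        rw [hMU]; exact conjInvMat (Umat (n+1)) NN (UUt _) (UtU _)
      -- reduce the quadratic form
      have hquad : phiVec (n + 1 + 1) ⬝ᵥ M⁻¹.mulVec (phiVec (n + 1 + 1)) =
          Sum.elim (phiVec (n + 1)) 0 ⬝ᵥ NN⁻¹.mulVec (Sum.elim (phiVec (n + 1)) 0) := by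
        rw [hMinv]
        rw [← Matrix.mulVec_mulVec, ← Matrix.mulVec_mulVec]
        rw [Matrix.dotProduct_mulVec]
        have hvm : phiVec (n + 1 + 1) ᵥ* Umat (n+1) = Sum.elim (phiVec (n + 1)) 0 := by
          rw [show Umat (n+1) = ((Umat (n+1))ᵀ)ᵀ from (Matrix.transpose_transpose _).symm,
            Matrix.vecMul_transpose]
          exact phi_transform (n + 1)
        rw [hvm]
        rw [show ((Umat (n+1))ᵀ).mulVec (phiVec (n + 1 + 1)) = Sum.elim (phiVec (n + 1)) 0 from
          phi_transform (n + 1)]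
      -- identify the Schur complement
      set w' : ℕ → ℝ := fun k => renIter p 1 x k + t with hw'
      have hS : A - B * D⁻¹ * B = HmatT (shiftSeq p) w' (n + 1) n -
          t • (1 : Matrix (Fin (2 ^ (n + 1))) (Fin (2 ^ (n + 1))) ℝ) := by
        rw [hDdiag, inv_diagonal' _ hDd, hB]
        rw [show Vfemat v (n+1) = Matrix.diagonal
          (fun k : Fin (2^(n+1)) => (v (2*(k:ℕ)) - v (2*(k:ℕ)+1))/2) from rfl]
        rw [Matrix.diagonal_mul_diagonal, Matrix.diagonal_mul_diagonal]
        ext j k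
        rw [Matrix.sub_apply, hA]
        rcases eq_or_ne j k with rfl | h
        · rw [Msub_apply_eq, Msub_apply_eq, Matrix.diagonal_apply_eq]
          have hpow : (2:ℕ) ^ (n+2) = 2 * 2 ^ (n+1) := by rw [pow_succ]; ring
          have hj := j.isLt
          have h0 : v (2 * (j:ℕ)) - t ≠ 0 := hx _ (by omega)
          have h1 : v (2 * (j:ℕ) + 1) - t ≠ 0 := hx _ (by omega)
          have hs : (v (2 * (j:ℕ)) - t) + (v (2 * (j:ℕ) + 1) - t) ≠ 0 := hsum _ hj
          have key := schur_scalar (p1 := p 1) h0 h1 hs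
          simp only [hw', hxdef, wAvg, renIter_succ, renIter_zero]
          linear_combination key
        · rw [Msub_apply_ne _ _ _ _ _ h, Msub_apply_ne _ _ _ _ _ h,
            Matrix.diagonal_apply_ne _ h, sub_zero]
      -- evaluate the block inverse
      have hblock : Sum.elim (phiVec (n + 1)) 0 ⬝ᵥ NN⁻¹.mulVec (Sum.elim (phiVec (n + 1)) 0) =
          phiVec (n + 1) ⬝ᵥ (A - B * D⁻¹ * B)⁻¹.mulVec (phiVec (n + 1)) := by
        by_cases hSdet : IsUnit (A - B * D⁻¹ * B).det
        · haveI iS : Invertible (A - B * ⅟D * B) := by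
            rw [hinvOfD]; exact Matrix.invertibleOfIsUnitDet _ hSdet
          haveI iN : Invertible NN := Matrix.fromBlocks₂₂Invertible A B B D
          rw [hNN, ← Matrix.invOf_eq_nonsing_inv, Matrix.invOf_fromBlocks₂₂_eq,
            Matrix.fromBlocks_mulVec, sumElim_dotProduct_sumElim]
          simp only [Matrix.mulVec_zero, add_zero, zero_dotProduct, dotProduct_zero]
          have hSS : ⅟(A - B * ⅟D * B) = (A - B * D⁻¹ * B)⁻¹ := by
            rw [Matrix.invOf_eq_nonsing_inv, hinvOfD]
          rw [hSS]
          simp only [Sum.elim_comp_inl, Sum.elim_comp_inr, Matrix.mulVec_zero, add_zero]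
        · have hNdet : ¬IsUnit NN.det := by
            intro hNdet
            apply hSdet
            haveI iN : Invertible NN := NN.invertibleOfIsUnitDet hNdet
            haveI iS : Invertible (A - B * ⅟D * B) :=
              Matrix.invertibleOfFromBlocks₂₂Invertible A B B D
            rw [hinvOfD] at iS
            exact Matrix.isUnit_det_of_invertible _
          rw [Matrix.nonsing_inv_apply_not_isUnit _ hNdet,
            Matrix.nonsing_inv_apply_not_isUnit _ hSdet]
          simp
      rw [hquad, hblock, hS]
      have hGood' : Good (shiftSeq p) (n + 1) (fun k => w' k - t) := by
        have he : (fun k => w' k - t) = renIter p 1 x := by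
          funext k; simp only [hw']; ring
        rw [he]
        exact hrec
      have := ih (shiftSeq p) t w' hGood'
      rw [this]
      have he : (fun k => w' k - t) = renIter p 1 x := by
        funext k; simp only [hw']; ring
      rw [he, renIter_comp p x (n + 1) 0]
      rfl
end
noncomputable section
open Finset

lemma good_of : ∀ (N : ℕ) (p : ℕ → ℝ) (x : ℕ → ℝ),
    (∀ j i, j < N → i < 2 ^ (N - j) → renIter p j x i ≠ 0) →
    (∀ j i, 1 ≤ j → j < N → i < 2 ^ (N - j) → renIter p j x i ≠ p j) →
    Good p N x := by
  intro N
  induction N with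
  | zero => intro p x _ _; simp [Good]
  | succ N ihN =>
      intro p x h1 h2
      match N with
      | 0 =>
          refine ⟨h1 0 0 (by omega) (by norm_num), h1 0 1 (by omega) (by norm_num)⟩
      | Nat.succ M =>
          refine ⟨?_, ?_, ?_⟩
          · intro j hj
            exact h1 0 j (by omega) (by simpa using hj)
          · intro k hk hc
            apply h2 1 k (by omega) (by omega) (by simpa using hk)
            have hb : x (2 * k + 1) = - x (2 * k) := by linarith
            have hzero : 1 / (2 * x (2 * k)) + 1 / (2 * x (2 * k + 1)) = 0 := by
              rw [hb]
              rcases eq_or_ne (x (2 * k)) 0 with hz | hz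
              · simp [hz]
              · field_simp
                ring
            rw [renIter_succ, renIter_zero, renIter_zero, hzero]
            simp
          · apply ihN
            · intro j i hj hi
              rw [renIter_comp]
              apply h1 (j + 1) i (by omega)
              have he : M + 1 + 1 - (j + 1) = M + 1 - j := by omega
              rw [he]
              exact hi
            · intro j i hj1 hj hi
              rw [renIter_comp]
              apply h2 (j + 1) i (by omega) (by omega)
              have he : M + 1 + 1 - (j + 1) = M + 1 - j := by omega
              rw [he]
              exact hi
end
noncomputable section
open Finset MeasureTheory ProbabilityTheory

variable {Ω : Type*} [MeasurableSpace Ω] {Pr : Measure Ω} [IsProbabilityMeasure Pr]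
  {V : ℕ → Ω → ℝ}

lemma renval_measurable (p : ℕ → ℝ) (t : ℝ) (hVmeas : ∀ k, Measurable (V k)) (j i : ℕ) :
    Measurable fun ω => renIter p j (fun k => V k ω - t) i :=
  (renIter_measurable p j i).comp
    (measurable_pi_lambda _ fun k => (hVmeas k).sub measurable_const)

/-- the law of each renormalized potential value has no atoms -/
lemma renval_null (p : ℕ → ℝ) (t : ℝ) (hVmeas : ∀ k, Measurable (V k))
    (hViid : iIndepFun V Pr)
    (ρ : ℝ → ℝ)
    (hρ : ∀ k, Measure.map (V k) Pr = volume.withDensity fun v => ENNReal.ofReal (ρ v)) :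
    ∀ j i s, Pr {ω | renIter p j (fun k => V k ω - t) i = s} = 0 := by
  intro j
  induction j with
  | zero =>
      intro i s
      have hset : {ω | renIter p 0 (fun k => V k ω - t) i = s} = V i ⁻¹' {s + t} := by
        ext ω
        simp only [Set.mem_setOf_eq, renIter_zero, Set.mem_preimage, Set.mem_singleton_iff]
        constructor <;> intro h <;> linarith
      rw [hset, ← Measure.map_apply (hVmeas i) (measurableSet_singleton _), hρ i]
      exact (withDensity_absolutelyContinuous volume _) (measure_singleton _)
  | succ j ih =>
      intro i s
      -- sibling values
      set Wl : Ω → ℝ := fun ω => renIter p j (fun k => V k ω - t) (2 * i) with hWl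
      set Wr : Ω → ℝ := fun ω => renIter p j (fun k => V k ω - t) (2 * i + 1) with hWr
      have hWlm : Measurable Wl := renval_measurable p t hVmeas j (2 * i)
      have hWrm : Measurable Wr := renval_measurable p t hVmeas j (2 * i + 1)
      -- independence of the two siblings
      have hInd : IndepFun Wl Wr Pr := by
        set S : Finset ℕ := Finset.Ico (2 * i * 2 ^ j) ((2 * i + 1) * 2 ^ j) with hSdef
        set T : Finset ℕ := Finset.Ico ((2 * i + 1) * 2 ^ j) ((2 * i + 1 + 1) * 2 ^ j) with hTdef
        have hST : Disjoint S T := Finset.Ico_disjoint_Ico_consecutive _ _ _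
        have hbase := hViid.indepFun_finset S T hST hVmeas
        set φl : (S → ℝ) → ℝ := fun g =>
          renIter p j (fun k => if h : k ∈ S then g ⟨k, h⟩ - t else 0) (2 * i) with hφl
        set φr : (T → ℝ) → ℝ := fun g =>
          renIter p j (fun k => if h : k ∈ T then g ⟨k, h⟩ - t else 0) (2 * i + 1) with hφr
        have hφlm : Measurable φl := by
          refine (renIter_measurable p j (2 * i)).comp (measurable_pi_lambda _ fun k => ?_)
          by_cases h : k ∈ S
          · simp only [dif_pos h]
            exact (measurable_pi_apply _).sub measurable_const
          · simp only [dif_neg h]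
            exact measurable_const
        have hφrm : Measurable φr := by
          refine (renIter_measurable p j (2 * i + 1)).comp (measurable_pi_lambda _ fun k => ?_)
          by_cases h : k ∈ T
          · simp only [dif_pos h]
            exact (measurable_pi_apply _).sub measurable_const
          · simp only [dif_neg h]
            exact measurable_const
        have hcomp := hbase.comp hφlm hφrm
        have hl : (φl ∘ fun a (i : S) => V i a) = Wl := by
          funext ω
          simp only [Function.comp_apply, hφl, hWl]
          refine renIter_congr p j _ _ (2 * i) fun m hm1 hm2 => ?_
          have hmem : m ∈ S := by rw [hSdef, Finset.mem_Ico]; exact ⟨hm1, hm2⟩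
          rw [dif_pos hmem]
        have hr : (φr ∘ fun a (i : T) => V i a) = Wr := by
          funext ω
          simp only [Function.comp_apply, hφr, hWr]
          refine renIter_congr p j _ _ (2 * i + 1) fun m hm1 hm2 => ?_
          have hmem : m ∈ T := by rw [hTdef, Finset.mem_Ico]; exact ⟨hm1, hm2⟩
          rw [dif_pos hmem]
        rw [hl, hr] at hcomp
        exact hcomp
      -- reduce to a product-measure computation
      have hmap : Measure.map (fun ω => (Wl ω, Wr ω)) Pr =
          (Measure.map Wl Pr).prod (Measure.map Wr Pr) :=
        (indepFun_iff_map_prod_eq_prod_map_map hWlm.aemeasurable hWrm.aemeasurable).mp hInd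
      set g : ℝ × ℝ → ℝ := fun q => (1 / (2 * q.1) + 1 / (2 * q.2))⁻¹ + p (j + 1) with hg
      have hgm : Measurable g := by
        simp only [hg, one_div]
        exact ((((measurable_fst.const_mul 2).inv).add
          ((measurable_snd.const_mul 2).inv)).inv).add_const _
      have hSet : MeasurableSet {q : ℝ × ℝ | g q = s} := hgm (measurableSet_singleton s)
      have hevent : {ω | renIter p (j + 1) (fun k => V k ω - t) i = s}
          = (fun ω => (Wl ω, Wr ω)) ⁻¹' {q | g q = s} := by
        ext ω
        simp only [Set.mem_setOf_eq, Set.mem_preimage, renIter_succ, hg, hWl, hWr]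
      rw [hevent, ← Measure.map_apply (hWlm.prodMk hWrm) hSet, hmap]
      haveI : IsProbabilityMeasure (Measure.map Wr Pr) :=
        Measure.isProbabilityMeasure_map hWrm.aemeasurable
      rw [Measure.prod_apply hSet]
      have hsec : ∀ a : ℝ, (Measure.map Wr Pr) (Prod.mk a ⁻¹' {q | g q = s}) = 0 := by
        intro a
        set d : ℝ := (s - p (j + 1))⁻¹ - 1 / (2 * a) with hd
        have hsub : (Prod.mk a ⁻¹' {q | g q = s}) ⊆ {0, d⁻¹ / 2} := by
          intro b hb
          simp only [Set.mem_preimage, Set.mem_setOf_eq, hg] at hb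
          have h1 : (1 / (2 * a) + 1 / (2 * b))⁻¹ = s - p (j + 1) := by linarith
          have h2 : 1 / (2 * a) + 1 / (2 * b) = (s - p (j + 1))⁻¹ := by
            rw [← h1, inv_inv]
          have h3 : 1 / (2 * b) = d := by rw [hd, ← h2]; ring
          rcases eq_or_ne b 0 with rfl | hb0
          · exact Set.mem_insert _ _
          · have h4 : (2 * b)⁻¹ = d := by rw [← h3]; ring
            have hdne : d ≠ 0 := by
              rw [← h4]
              exact inv_ne_zero (by simpa using hb0)
            have h5 : 2 * b = d⁻¹ := by
              rw [← inv_inv (2 * b), h4]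
            have : b = d⁻¹ / 2 := by rw [← h5]; ring
            exact Set.mem_insert_iff.mpr (Or.inr (by simpa using this))
        refine measure_mono_null hsub ?_
        have hm0 : (Measure.map Wr Pr) {(0:ℝ)} = 0 := by
          rw [Measure.map_apply hWrm (measurableSet_singleton _)]
          exact ih (2 * i + 1) 0
        have hm1 : (Measure.map Wr Pr) {d⁻¹ / 2} = 0 := by
          rw [Measure.map_apply hWrm (measurableSet_singleton _)]
          exact ih (2 * i + 1) (d⁻¹ / 2)
        rw [Set.insert_eq]
        exact le_antisymm (le_trans (measure_union_le _ _) (by rw [hm0, hm1]; simp)) (by positivity)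
      simp only [hsec]
      simp
end
noncomputable section
open Finset MeasureTheory ProbabilityTheory

variable {Ω : Type*} [MeasurableSpace Ω] {Pr : Measure Ω} [IsProbabilityMeasure Pr]
  {V : ℕ → Ω → ℝ}

lemma good_null (p : ℕ → ℝ) (t : ℝ) (hVmeas : ∀ k, Measurable (V k))
    (hViid : iIndepFun V Pr)
    (ρ : ℝ → ℝ)
    (hρ : ∀ k, Measure.map (V k) Pr = volume.withDensity fun v => ENNReal.ofReal (ρ v))
    (N : ℕ) :
    Pr {ω | ¬ Good p N (fun k => V k ω - t)} = 0 := by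
  have hsub : {ω | ¬ Good p N (fun k => V k ω - t)} ⊆
      ⋃ (j : ℕ) (i : ℕ), ({ω | renIter p j (fun k => V k ω - t) i = 0}
        ∪ {ω | renIter p j (fun k => V k ω - t) i = p j}) := by
    intro ω hω
    by_contra hc
    simp only [Set.mem_iUnion, Set.mem_union, Set.mem_setOf_eq, not_exists, not_or] at hc
    exact hω (good_of N p _ (fun j i _ _ => (hc j i).1) (fun j i _ _ _ => (hc j i).2))
  refine measure_mono_null hsub ?_
  refine measure_iUnion_null fun j => measure_iUnion_null fun i => measure_union_null ?_ ?_
  · exact renval_null p t hVmeas hViid ρ hρ j i 0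
  · exact renval_null p t hVmeas hViid ρ hρ j i (p j)
end


/-- **Tail bound for `F_n(t)`** (Lemma, part ii): under the non-concentration assumption
on `I` with exponent `δ`, there is `C < ∞` such that
`P(|F_n(t)| ≥ |α|⁻¹) ≤ C 2^{(c-δ) n} |α|` for all `n ≥ 1`, `t ∈ I`, `α ≠ 0`, where
`F_n(t) = ⟨φ_n, (H_{n,n-1} - t)^{-1} φ_n⟩`. -/
theorem F_tail_bound
    {Ω : Type*} [MeasurableSpace Ω] (Pr : Measure Ω) [IsProbabilityMeasure Pr]
    (c ε : ℝ) (hc : 0 < c) (hε : 0 < ε)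
    (p : ℕ → ℝ) (hp : ∀ r : ℕ, 1 ≤ r → |p r| ≤ ε * 2 ^ (-(c * (r : ℝ))))
    (V : ℕ → Ω → ℝ) (hVmeas : ∀ k, Measurable (V k))
    (hViid : iIndepFun V Pr)
    (ρ : ℝ → ℝ) (hρpos : ∀ v, 0 ≤ ρ v)
    (hρ : ∀ k, Measure.map (V k) Pr = volume.withDensity fun v => ENNReal.ofReal (ρ v))
    (hρbd : ∃ M : ℝ, ∀ v, ρ v ≤ M)
    (I : Set ℝ) (δ : ℝ) (hδ : 0 < δ) (hNC : NonConc Pr p V I c δ) :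
    ∃ C : ℝ, 0 ≤ C ∧ ∀ n : ℕ, 1 ≤ n → ∀ t ∈ I, ∀ α : ℝ, α ≠ 0 →
      Pr {ω | |α|⁻¹ ≤
          |phiVec n ⬝ᵥ (HmatT p (fun i => V i ω) n (n - 1) -
            t • (1 : Matrix (Fin (2 ^ n)) (Fin (2 ^ n)) ℝ))⁻¹.mulVec (phiVec n)|}
        ≤ ENNReal.ofReal (C * 2 ^ ((c - δ) * (n : ℝ)) * |α|) := by
  obtain ⟨K, hK0, hNCb⟩ := hNC
  refine ⟨2 * K, by positivity, ?_⟩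
  intro n hn t ht α hα
  obtain ⟨m, rfl⟩ : ∃ m, n = m + 1 := ⟨n - 1, by omega⟩
  have hαpos : (0:ℝ) < |α| := abs_pos.mpr hα
  set x : Ω → ℕ → ℝ := fun ω k => V k ω - t with hx
  set W : Ω → ℝ := fun ω => renIter p (m + 1) (x ω) 0 with hW
  set A : Set ℝ := Set.Icc (p (m + 1) - |α|) (p (m + 1) + |α|) with hA
  have hsub : {ω | |α|⁻¹ ≤
        |phiVec (m + 1) ⬝ᵥ (HmatT p (fun i => V i ω) (m + 1) (m + 1 - 1) -
          t • (1 : Matrix (Fin (2 ^ (m + 1))) (Fin (2 ^ (m + 1))) ℝ))⁻¹.mulVec (phiVec (m + 1))|}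
      ⊆ {ω | ¬ Good p (m + 1) (fun k => V k ω - t)} ∪ {ω | W ω ∈ A} := by
    intro ω hω
    by_cases hg : Good p (m + 1) (fun k => V k ω - t)
    · right
      simp only [Set.mem_setOf_eq] at hω
      have heq := F_eq m p t (fun i => V i ω) hg
      have hω' : |α|⁻¹ ≤ |(W ω - p (m + 1))⁻¹| := by
        rw [hW, hx]
        rw [show (m + 1) - 1 = m from rfl] at hω
        calc |α|⁻¹ ≤ _ := hω
          _ = _ := by rw [heq]
      have hne : W ω - p (m + 1) ≠ 0 := by
        intro h0
        rw [h0, _root_.inv_zero, abs_zero] at hω'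
        exact absurd hω' (not_le.mpr (by positivity))
      rw [abs_inv] at hω'
      have habs : 0 < |W ω - p (m + 1)| := abs_pos.mpr hne
      have hle : |W ω - p (m + 1)| ≤ |α| := by
        have h2 := inv_anti₀ (by positivity : (0:ℝ) < |α|⁻¹) hω'
        rwa [inv_inv, inv_inv] at h2
      have := abs_le.mp hle
      simp only [Set.mem_setOf_eq, hA, Set.mem_Icc]
      constructor <;> linarith [this.1, this.2]
    · left
      exact hg
  calc Pr _ ≤ Pr ({ω | ¬ Good p (m + 1) (fun k => V k ω - t)} ∪ {ω | W ω ∈ A}) :=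
        measure_mono hsub
    _ ≤ Pr {ω | ¬ Good p (m + 1) (fun k => V k ω - t)} + Pr {ω | W ω ∈ A} :=
        measure_union_le _ _
    _ = Pr {ω | W ω ∈ A} := by
        rw [good_null p t hVmeas hViid ρ hρ (m + 1), zero_add]
    _ ≤ ENNReal.ofReal (K * 2 ^ ((c - δ) * ((m + 1 : ℕ) : ℝ))) * volume A :=
        hNCb (m + 1) (by omega) t ht A measurableSet_Icc
    _ ≤ ENNReal.ofReal (2 * K * 2 ^ ((c - δ) * ((m + 1 : ℕ) : ℝ)) * |α|) := by
        rw [hA, Real.volume_Icc, show p (m + 1) + |α| - (p (m + 1) - |α|) = 2 * |α| by ring]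
        rw [← ENNReal.ofReal_mul (by positivity)]
        apply ENNReal.ofReal_le_ofReal
        rw [show K * 2 ^ ((c - δ) * ((m + 1 : ℕ) : ℝ)) * (2 * |α|)
          = 2 * K * 2 ^ ((c - δ) * ((m + 1 : ℕ) : ℝ)) * |α| by ring]
end
end

section
/- Let V and W be independent real random variables whose laws have bounded densities ϱ and ϱ̃ in L¹ ∩ L^∞, and let p ∈ ℝ. Then the law of (1/(2V) + 1/(2W))^{−1} + p is absolutely continuous with respect to Lebesgue measure, with a density T_p(ϱ, ϱ̃) satisfying ‖T_p(ϱ, ϱ̃)‖_∞ ≤ ‖ϱ‖_∞ + ‖ϱ̃‖_∞; equivalently, P( (1/(2V) + 1/(2W))^{−1} + p ∈ A ) ≤ (‖ϱ‖_∞ + ‖ϱ̃‖_∞)·|A| for every Borel set A ⊂ ℝ of Lebesgue measure |A|. -/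
set_option maxHeartbeats 1000000

open MeasureTheory ProbabilityTheory Matrix Filter Topology

private lemma measurableSet_slice (c pp : ℝ) {A : Set ℝ} (hA : MeasurableSet A) :
    MeasurableSet {t : ℝ | t + c ≠ 0 ∧ 2 * t * c / (t + c) + pp ∈ A} := by
  have hφm : Measurable (fun t : ℝ => 2 * t * c / (t + c) + pp) :=
    Measurable.add_const
      (((measurable_id.const_mul 2).mul_const c).div (measurable_id.add_const c)) pp
  have : {t : ℝ | t + c ≠ 0 ∧ 2 * t * c / (t + c) + pp ∈ A} =
      ((fun t : ℝ => t + c) ⁻¹' {0})ᶜ ∩ (fun t : ℝ => 2 * t * c / (t + c) + pp) ⁻¹' A := by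
    ext t
    simp only [Set.mem_setOf_eq, Set.mem_inter_iff, Set.mem_compl_iff,
      Set.mem_preimage, Set.mem_singleton_iff]
  rw [this]
  exact (((measurable_id.add_const c) (measurableSet_singleton 0)).compl).inter (hφm hA)

private lemma key_slice (c pp : ℝ) {A : Set ℝ} (hA : MeasurableSet A) :
    ∫⁻ t in {t : ℝ | t + c ≠ 0 ∧ 2 * t * c / (t + c) + pp ∈ A},
      ENNReal.ofReal (2 * c ^ 2 / (t + c) ^ 2) ∂volume ≤ volume A := by
  rcases eq_or_ne c 0 with rfl | hc
  · simp
  set φ : ℝ → ℝ := fun t => 2 * t * c / (t + c) + pp with hφdef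
  set s : Set ℝ := {t : ℝ | t + c ≠ 0 ∧ 2 * t * c / (t + c) + pp ∈ A} with hsdef
  have hsm : MeasurableSet s := measurableSet_slice c pp hA
  have hderiv : ∀ t ∈ s, HasDerivWithinAt φ (2 * c ^ 2 / (t + c) ^ 2) s t := by
    intro t ht
    have htc : t + c ≠ 0 := ht.1
    have h1 : HasDerivAt (fun t : ℝ => 2 * t * c) (2 * c) t := by
      simpa using ((hasDerivAt_id t).const_mul 2).mul_const c
    have h2 : HasDerivAt (fun t : ℝ => t + c) 1 t := (hasDerivAt_id t).add_const c
    have h3 := (h1.div h2 htc).add_const pp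
    have : (2 * c * (t + c) - 2 * t * c * 1) / (t + c) ^ 2 = 2 * c ^ 2 / (t + c) ^ 2 := by
      congr 1; ring
    rw [this] at h3
    exact h3.hasDerivWithinAt
  have hinj : Set.InjOn φ s := by
    intro a ha b hb hab
    have ha' : a + c ≠ 0 := ha.1
    have hb' : b + c ≠ 0 := hb.1
    have h0 : 2 * a * c / (a + c) = 2 * b * c / (b + c) := by
      have := hab
      simp only [hφdef] at this
      linarith
    have h1 : 2 * a * c * (b + c) = 2 * b * c * (a + c) := (div_eq_div_iff ha' hb').mp h0
    have h2 : 2 * c ^ 2 * a = 2 * c ^ 2 * b := by linear_combination h1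
    exact mul_left_cancel₀ (by positivity) h2
  calc ∫⁻ t in s, ENNReal.ofReal (2 * c ^ 2 / (t + c) ^ 2) ∂volume
      ≤ volume (φ '' s) := by
        have := lintegral_abs_det_fderiv_le_addHaar_image volume hsm
          (fun x hx => (hderiv x hx).hasFDerivWithinAt) hinj
        simp only [ContinuousLinearMap.det_toSpanSingleton] at this
        refine le_trans (le_of_eq ?_) this
        apply setLIntegral_congr_fun hsm
        intro t ht
        beta_reduce
        rw [abs_of_nonneg (by positivity)]
    _ ≤ volume A := by
        apply measure_mono
        rintro x ⟨t, ht, rfl⟩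
        exact ht.2

private lemma aux_main {Ω : Type*} [MeasurableSpace Ω] (Pr : Measure Ω) [IsProbabilityMeasure Pr]
    (Vr Wr : Ω → ℝ) (hV : Measurable Vr) (hW : Measurable Wr)
    (hindep : IndepFun Vr Wr Pr)
    (f g : ℝ → ℝ) (hfm : Measurable f) (hgm : Measurable g)
    (hf0 : ∀ v, 0 ≤ f v) (hg0 : ∀ v, 0 ≤ g v)
    (hVd : Measure.map Vr Pr = volume.withDensity fun v => ENNReal.ofReal (f v))
    (hWd : Measure.map Wr Pr = volume.withDensity fun v => ENNReal.ofReal (g v))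
    (pp : ℝ) {A : Set ℝ} (hA : MeasurableSet A) :
    Pr {ω | (1 / (2 * Vr ω) + 1 / (2 * Wr ω))⁻¹ + pp ∈ A} ≤
      (eLpNorm f ⊤ volume + eLpNorm g ⊤ volume) * volume A := by
  set F : ℝ → ENNReal := fun v => ENNReal.ofReal (f v) with hFdef
  set G : ℝ → ENNReal := fun v => ENNReal.ofReal (g v) with hGdef
  have hFm : Measurable F := hfm.ennreal_ofReal
  have hGm : Measurable G := hgm.ennreal_ofReal
  set ρ : Measure ℝ := volume.withDensity F with hρdef
  set ρt : Measure ℝ := volume.withDensity G with hρtdef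
  have hρP : IsProbabilityMeasure ρ := hVd ▸ Measure.isProbabilityMeasure_map hV.aemeasurable
  have hρtP : IsProbabilityMeasure ρt := hWd ▸ Measure.isProbabilityMeasure_map hW.aemeasurable
  set ψ : ℝ × ℝ → ℝ := fun q => (1 / (2 * q.1) + 1 / (2 * q.2))⁻¹ + pp with hψdef
  have hψm : Measurable ψ := by
    apply Measurable.add_const _ pp
    exact ((measurable_const.div (measurable_fst.const_mul 2)).add
      (measurable_const.div (measurable_snd.const_mul 2))).inv
  have hpair : Measurable fun ω => (Vr ω, Wr ω) := hV.prodMk hW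
  have hjoint : Measure.map (fun ω => (Vr ω, Wr ω)) Pr = ρ.prod ρt := by
    rw [(indepFun_iff_map_prod_eq_prod_map_map hV.aemeasurable hW.aemeasurable).mp hindep,
      hVd, hWd]
  have key0 : Pr {ω | (1 / (2 * Vr ω) + 1 / (2 * Wr ω))⁻¹ + pp ∈ A}
      = (ρ.prod ρt) (ψ ⁻¹' A) := by
    rw [← hjoint, Measure.map_apply hpair (hψm hA)]
    rfl
  -- good set
  set GS : Set (ℝ × ℝ) :=
    {q : ℝ × ℝ | q.1 = 0}ᶜ ∩ ({q : ℝ × ℝ | q.2 = 0}ᶜ ∩ {q : ℝ × ℝ | q.1 + q.2 = 0}ᶜ) with hGSdef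
  have hm1 : MeasurableSet {q : ℝ × ℝ | q.1 = 0} := measurable_fst (measurableSet_singleton 0)
  have hm2 : MeasurableSet {q : ℝ × ℝ | q.2 = 0} := measurable_snd (measurableSet_singleton 0)
  have hm3 : MeasurableSet {q : ℝ × ℝ | q.1 + q.2 = 0} :=
    (measurable_fst.add measurable_snd) (measurableSet_singleton 0)
  have hGSm : MeasurableSet GS := hm1.compl.inter (hm2.compl.inter hm3.compl)
  have hGc : (ρ.prod ρt) GSᶜ = 0 := by
    have hac : ρ.prod ρt ≪ (volume : Measure ℝ).prod volume :=
      (withDensity_absolutelyContinuous volume F).prod (withDensity_absolutelyContinuous volume G)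
    apply hac
    have hsub : GSᶜ ⊆ {q : ℝ × ℝ | q.1 = 0} ∪
        ({q : ℝ × ℝ | q.2 = 0} ∪ {q : ℝ × ℝ | q.1 + q.2 = 0}) := by
      intro q hq
      simp only [hGSdef, Set.compl_inter, compl_compl, Set.mem_union] at hq ⊢
      tauto
    have e1 : ((volume : Measure ℝ).prod volume) {q : ℝ × ℝ | q.1 = 0} = 0 := by
      have : {q : ℝ × ℝ | q.1 = 0} = ({0} : Set ℝ) ×ˢ (Set.univ : Set ℝ) := by
        ext ⟨a, b⟩; simp [eq_comm]
      rw [this, Measure.prod_prod]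
      simp
    have e2 : ((volume : Measure ℝ).prod volume) {q : ℝ × ℝ | q.2 = 0} = 0 := by
      have : {q : ℝ × ℝ | q.2 = 0} = (Set.univ : Set ℝ) ×ˢ ({0} : Set ℝ) := by
        ext ⟨a, b⟩; simp [eq_comm]
      rw [this, Measure.prod_prod]
      simp
    have e3 : ((volume : Measure ℝ).prod volume) {q : ℝ × ℝ | q.1 + q.2 = 0} = 0 := by
      rw [Measure.prod_apply hm3]
      have : ∀ v : ℝ, (Prod.mk v ⁻¹' {q : ℝ × ℝ | q.1 + q.2 = 0}) = {-v} := by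
        intro v; ext w
        simp only [Set.mem_preimage, Set.mem_setOf_eq, Set.mem_singleton_iff]
        constructor <;> intro h <;> linarith
      simp [this]
    exact measure_mono_null hsub (measure_union_null e1 (measure_union_null e2 e3))
  set T : Set (ℝ × ℝ) := ψ ⁻¹' A ∩ GS with hTdef
  have hTm : MeasurableSet T := (hψm hA).inter hGSm
  have key1 : (ρ.prod ρt) (ψ ⁻¹' A) ≤ (ρ.prod ρt) T := by
    have hsub : ψ ⁻¹' A ⊆ T ∪ GSᶜ := by
      intro q hq
      by_cases h : q ∈ GS
      · exact Or.inl ⟨hq, h⟩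
      · exact Or.inr h
    calc (ρ.prod ρt) (ψ ⁻¹' A) ≤ (ρ.prod ρt) (T ∪ GSᶜ) := measure_mono hsub
      _ ≤ (ρ.prod ρt) T + (ρ.prod ρt) GSᶜ := measure_union_le _ _
      _ = (ρ.prod ρt) T := by rw [hGc, add_zero]
  set J₁ : ℝ × ℝ → ENNReal := fun q => ENNReal.ofReal (2 * q.2 ^ 2 / (q.1 + q.2) ^ 2) with hJ₁def
  set J₂ : ℝ × ℝ → ENNReal := fun q => ENNReal.ofReal (2 * q.1 ^ 2 / (q.1 + q.2) ^ 2) with hJ₂def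
  have hJ₁m : Measurable J₁ :=
    (((measurable_snd.pow_const 2).const_mul 2).div
      ((measurable_fst.add measurable_snd).pow_const 2)).ennreal_ofReal
  have hJ₂m : Measurable J₂ :=
    (((measurable_fst.pow_const 2).const_mul 2).div
      ((measurable_fst.add measurable_snd).pow_const 2)).ennreal_ofReal
  have hpoint : ∀ q, T.indicator (1 : ℝ × ℝ → ENNReal) q ≤ T.indicator J₁ q + T.indicator J₂ q := by
    intro q
    by_cases hq : q ∈ T
    · have h3 : q.1 + q.2 ≠ 0 := hq.2.2.2
      rw [Set.indicator_of_mem hq, Set.indicator_of_mem hq, Set.indicator_of_mem hq]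
      have hr : (1 : ℝ) ≤ 2 * q.2 ^ 2 / (q.1 + q.2) ^ 2 + 2 * q.1 ^ 2 / (q.1 + q.2) ^ 2 := by
        rw [← add_div, le_div_iff₀ (by positivity)]
        nlinarith [sq_nonneg (q.1 - q.2)]
      calc (1 : ℝ × ℝ → ENNReal) q = ENNReal.ofReal 1 := by simp
        _ ≤ ENNReal.ofReal (2 * q.2 ^ 2 / (q.1 + q.2) ^ 2 + 2 * q.1 ^ 2 / (q.1 + q.2) ^ 2) :=
            ENNReal.ofReal_le_ofReal hr
        _ = J₁ q + J₂ q := ENNReal.ofReal_add (by positivity) (by positivity)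
    · simp [Set.indicator_of_notMem hq]
  have key2 : (ρ.prod ρt) T ≤
      ∫⁻ q, T.indicator J₁ q ∂(ρ.prod ρt) + ∫⁻ q, T.indicator J₂ q ∂(ρ.prod ρt) := by
    rw [← lintegral_indicator_one hTm]
    calc ∫⁻ q, T.indicator 1 q ∂(ρ.prod ρt)
        ≤ ∫⁻ q, (T.indicator J₁ q + T.indicator J₂ q) ∂(ρ.prod ρt) := lintegral_mono hpoint
      _ = _ := lintegral_add_left (hJ₁m.indicator hTm) _
  -- bound on `F`
  have haeF : ∀ᵐ v ∂(volume : Measure ℝ), F v ≤ eLpNorm f ⊤ volume := by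
    rw [eLpNorm_exponent_top]
    filter_upwards [ae_le_eLpNormEssSup (f := f) (μ := (volume : Measure ℝ))] with v hv
    rw [hFdef]
    simp only
    rwa [← Real.enorm_eq_ofReal (hf0 v)]
  have haeG : ∀ᵐ v ∂(volume : Measure ℝ), G v ≤ eLpNorm g ⊤ volume := by
    rw [eLpNorm_exponent_top]
    filter_upwards [ae_le_eLpNormEssSup (f := g) (μ := (volume : Measure ℝ))] with v hv
    rw [hGdef]
    simp only
    rwa [← Real.enorm_eq_ofReal (hg0 v)]
  -- first term
  have term1 : ∫⁻ q, T.indicator J₁ q ∂(ρ.prod ρt) ≤ eLpNorm f ⊤ volume * volume A := by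
    rw [lintegral_prod_symm' _ (hJ₁m.indicator hTm)]
    have inner : ∀ w : ℝ, ∫⁻ v, T.indicator J₁ (v, w) ∂ρ ≤ eLpNorm f ⊤ volume * volume A := by
      intro w
      rw [hρdef, lintegral_withDensity_eq_lintegral_mul volume hFm
        (show Measurable fun v : ℝ => T.indicator J₁ (v, w) by
          exact (hJ₁m.indicator hTm).comp (measurable_id.prodMk measurable_const))]
      simp only [Pi.mul_apply, Function.comp]
      rcases eq_or_ne w 0 with rfl | hw
      · have hz : ∀ v : ℝ, T.indicator J₁ (v, (0 : ℝ)) = 0 := by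
          intro v
          apply Set.indicator_of_notMem
          intro hmem
          exact hmem.2.2.1 rfl
        simp only [hz, mul_zero, lintegral_zero]
        exact zero_le
      · set sA : Set ℝ := {t : ℝ | t + w ≠ 0 ∧ 2 * t * w / (t + w) + pp ∈ A} with hsAdef
        have hsAm : MeasurableSet sA := measurableSet_slice w pp hA
        calc ∫⁻ v, F v * T.indicator J₁ (v, w) ∂volume
            ≤ ∫⁻ v, eLpNorm f ⊤ volume *
                sA.indicator (fun t => ENNReal.ofReal (2 * w ^ 2 / (t + w) ^ 2)) v ∂volume := by
              apply lintegral_mono_ae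
              filter_upwards [haeF] with v hv
              by_cases hvT : (v, w) ∈ T
              · have h1 : v + w ≠ 0 := hvT.2.2.2
                have hv0 : v ≠ 0 := hvT.2.1
                have hmemA : (1 / (2 * v) + 1 / (2 * w))⁻¹ + pp ∈ A := hvT.1
                have hid : (1 / (2 * v) + 1 / (2 * w))⁻¹ = 2 * v * w / (v + w) := by
                  have hsum : 1 / (2 * v) + 1 / (2 * w) = (v + w) / (2 * v * w) := by
                    field_simp
                    ring
                  rw [hsum, inv_div]
                have hvsA : v ∈ sA := ⟨h1, by rw [← hid]; exact hmemA⟩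
                rw [Set.indicator_of_mem hvT, Set.indicator_of_mem hvsA]
                exact mul_le_mul_left hv _
              · rw [Set.indicator_of_notMem hvT, mul_zero]
                exact zero_le
          _ = eLpNorm f ⊤ volume *
                ∫⁻ v, sA.indicator (fun t => ENNReal.ofReal (2 * w ^ 2 / (t + w) ^ 2)) v ∂volume :=
              lintegral_const_mul _ (Measurable.indicator
                ((measurable_const.div ((measurable_id.add_const w).pow_const 2)).ennreal_ofReal)
                hsAm)
          _ ≤ eLpNorm f ⊤ volume * volume A := by
              apply mul_le_mul_right
              rw [lintegral_indicator hsAm]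
              exact key_slice w pp hA
    calc ∫⁻ w, ∫⁻ v, T.indicator J₁ (v, w) ∂ρ ∂ρt
        ≤ ∫⁻ _, eLpNorm f ⊤ volume * volume A ∂ρt := lintegral_mono inner
      _ = eLpNorm f ⊤ volume * volume A := by rw [lintegral_const, measure_univ, mul_one]
  -- second term
  have term2 : ∫⁻ q, T.indicator J₂ q ∂(ρ.prod ρt) ≤ eLpNorm g ⊤ volume * volume A := by
    rw [lintegral_prod _ (hJ₂m.indicator hTm).aemeasurable]
    have inner : ∀ v : ℝ, ∫⁻ w, T.indicator J₂ (v, w) ∂ρt ≤ eLpNorm g ⊤ volume * volume A := by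
      intro v
      rw [hρtdef, lintegral_withDensity_eq_lintegral_mul volume hGm
        (show Measurable fun w : ℝ => T.indicator J₂ (v, w) by
          exact (hJ₂m.indicator hTm).comp (measurable_const.prodMk measurable_id))]
      simp only [Pi.mul_apply, Function.comp]
      rcases eq_or_ne v 0 with rfl | hv
      · have hz : ∀ w : ℝ, T.indicator J₂ ((0 : ℝ), w) = 0 := by
          intro w
          apply Set.indicator_of_notMem
          intro hmem
          exact hmem.2.1 rfl
        simp only [hz, mul_zero, lintegral_zero]
        exact zero_le
      · set sA : Set ℝ := {t : ℝ | t + v ≠ 0 ∧ 2 * t * v / (t + v) + pp ∈ A} with hsAdef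
        have hsAm : MeasurableSet sA := measurableSet_slice v pp hA
        calc ∫⁻ w, G w * T.indicator J₂ (v, w) ∂volume
            ≤ ∫⁻ w, eLpNorm g ⊤ volume *
                sA.indicator (fun t => ENNReal.ofReal (2 * v ^ 2 / (t + v) ^ 2)) w ∂volume := by
              apply lintegral_mono_ae
              filter_upwards [haeG] with w hw
              by_cases hvT : (v, w) ∈ T
              · have h1 : v + w ≠ 0 := hvT.2.2.2
                have hw0 : w ≠ 0 := hvT.2.2.1
                have h1' : w + v ≠ 0 := by intro h; exact h1 (by linarith)
                have hmemA : (1 / (2 * v) + 1 / (2 * w))⁻¹ + pp ∈ A := hvT.1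
                have hid : (1 / (2 * v) + 1 / (2 * w))⁻¹ = 2 * w * v / (w + v) := by
                  have hsum : 1 / (2 * v) + 1 / (2 * w) = (w + v) / (2 * w * v) := by
                    field_simp
                  rw [hsum, inv_div]
                have hwsA : w ∈ sA := ⟨h1', by rw [← hid]; exact hmemA⟩
                rw [Set.indicator_of_mem hvT, Set.indicator_of_mem hwsA]
                have hJval : J₂ (v, w) = ENNReal.ofReal (2 * v ^ 2 / (w + v) ^ 2) := by
                  rw [hJ₂def]
                  simp only
                  rw [add_comm v w]
                rw [hJval]
                exact mul_le_mul_left hw _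
              · rw [Set.indicator_of_notMem hvT, mul_zero]
                exact zero_le
          _ = eLpNorm g ⊤ volume *
                ∫⁻ w, sA.indicator (fun t => ENNReal.ofReal (2 * v ^ 2 / (t + v) ^ 2)) w ∂volume :=
              lintegral_const_mul _ (Measurable.indicator
                ((measurable_const.div ((measurable_id.add_const v).pow_const 2)).ennreal_ofReal)
                hsAm)
          _ ≤ eLpNorm g ⊤ volume * volume A := by
              apply mul_le_mul_right
              rw [lintegral_indicator hsAm]
              exact key_slice v pp hA
    calc ∫⁻ v, ∫⁻ w, T.indicator J₂ (v, w) ∂ρt ∂ρ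
        ≤ ∫⁻ _, eLpNorm g ⊤ volume * volume A ∂ρ := lintegral_mono inner
      _ = eLpNorm g ⊤ volume * volume A := by rw [lintegral_const, measure_univ, mul_one]
  calc Pr {ω | (1 / (2 * Vr ω) + 1 / (2 * Wr ω))⁻¹ + pp ∈ A}
      = (ρ.prod ρt) (ψ ⁻¹' A) := key0
    _ ≤ (ρ.prod ρt) T := key1
    _ ≤ ∫⁻ q, T.indicator J₁ q ∂(ρ.prod ρt) + ∫⁻ q, T.indicator J₂ q ∂(ρ.prod ρt) := key2
    _ ≤ eLpNorm f ⊤ volume * volume A + eLpNorm g ⊤ volume * volume A := add_le_add term1 term2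
    _ = (eLpNorm f ⊤ volume + eLpNorm g ⊤ volume) * volume A := (add_mul _ _ _).symm

/-- **Boundedness of the renormalized density** (Lemma A.1): if `V ~ ϱ` and `W ~ ϱ̃` are
independent with bounded densities, then the law of `(1/(2V) + 1/(2W))⁻¹ + p` is
absolutely continuous with density `T_p(ϱ, ϱ̃)` satisfying
`‖T_p(ϱ, ϱ̃)‖_∞ ≤ ‖ϱ‖_∞ + ‖ϱ̃‖_∞`; equivalently
`P((1/(2V) + 1/(2W))⁻¹ + p ∈ A) ≤ (‖ϱ‖_∞ + ‖ϱ̃‖_∞) |A|` for every Borel set `A`. -/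
theorem renormalized_density_bounded
    {Ω : Type*} [MeasurableSpace Ω] (Pr : Measure Ω) [IsProbabilityMeasure Pr]
    (Vr Wr : Ω → ℝ) (hV : Measurable Vr) (hW : Measurable Wr)
    (hindep : IndepFun Vr Wr Pr)
    (f g : ℝ → ℝ) (hf0 : ∀ v, 0 ≤ f v) (hg0 : ∀ v, 0 ≤ g v)
    (hfi : Integrable f volume) (hgi : Integrable g volume)
    (hfb : ∃ M : ℝ, ∀ v, f v ≤ M) (hgb : ∃ M : ℝ, ∀ v, g v ≤ M)
    (hVd : Measure.map Vr Pr = volume.withDensity fun v => ENNReal.ofReal (f v))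
    (hWd : Measure.map Wr Pr = volume.withDensity fun v => ENNReal.ofReal (g v))
    (pp : ℝ) :
    Measure.map (fun ω => (1 / (2 * Vr ω) + 1 / (2 * Wr ω))⁻¹ + pp) Pr ≪ volume ∧
    ∀ A : Set ℝ, MeasurableSet A →
      Pr {ω | (1 / (2 * Vr ω) + 1 / (2 * Wr ω))⁻¹ + pp ∈ A} ≤
        (eLpNorm f ⊤ volume + eLpNorm g ⊤ volume) * volume A := by
  -- replace the densities by measurable representatives
  have hfaem : AEMeasurable f volume := hfi.aemeasurable
  have hgaem : AEMeasurable g volume := hgi.aemeasurable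
  set f₂ : ℝ → ℝ := fun v => max (hfaem.mk f v) 0 with hf₂def
  set g₂ : ℝ → ℝ := fun v => max (hgaem.mk g v) 0 with hg₂def
  have hf₂m : Measurable f₂ := hfaem.measurable_mk.max measurable_const
  have hg₂m : Measurable g₂ := hgaem.measurable_mk.max measurable_const
  have hf₂0 : ∀ v, 0 ≤ f₂ v := fun v => le_max_right _ _
  have hg₂0 : ∀ v, 0 ≤ g₂ v := fun v => le_max_right _ _
  have hf₂ae : f =ᵐ[volume] f₂ := by
    filter_upwards [hfaem.ae_eq_mk] with v hv
    rw [hf₂def]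
    simp only
    rw [← hv, max_eq_left (hf0 v)]
  have hg₂ae : g =ᵐ[volume] g₂ := by
    filter_upwards [hgaem.ae_eq_mk] with v hv
    rw [hg₂def]
    simp only
    rw [← hv, max_eq_left (hg0 v)]
  have hVd₂ : Measure.map Vr Pr = volume.withDensity fun v => ENNReal.ofReal (f₂ v) := by
    rw [hVd]
    exact withDensity_congr_ae (hf₂ae.mono fun v hv => by simp only [hv])
  have hWd₂ : Measure.map Wr Pr = volume.withDensity fun v => ENNReal.ofReal (g₂ v) := by
    rw [hWd]
    exact withDensity_congr_ae (hg₂ae.mono fun v hv => by simp only [hv])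
  have hNf : eLpNorm f ⊤ volume = eLpNorm f₂ ⊤ volume := eLpNorm_congr_ae hf₂ae
  have hNg : eLpNorm g ⊤ volume = eLpNorm g₂ ⊤ volume := eLpNorm_congr_ae hg₂ae
  have main : ∀ A : Set ℝ, MeasurableSet A →
      Pr {ω | (1 / (2 * Vr ω) + 1 / (2 * Wr ω))⁻¹ + pp ∈ A} ≤
        (eLpNorm f ⊤ volume + eLpNorm g ⊤ volume) * volume A := by
    intro A hA
    rw [hNf, hNg]
    exact aux_main Pr Vr Wr hV hW hindep f₂ g₂ hf₂m hg₂m hf₂0 hg₂0 hVd₂ hWd₂ pp hA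
  refine ⟨?_, main⟩
  have hmap : Measurable fun ω => (1 / (2 * Vr ω) + 1 / (2 * Wr ω))⁻¹ + pp := by
    apply Measurable.add_const _ pp
    exact ((measurable_const.div (hV.const_mul 2)).add
      (measurable_const.div (hW.const_mul 2))).inv
  apply Measure.AbsolutelyContinuous.mk
  intro s hs hs0
  rw [Measure.map_apply hmap hs]
  have h1 := main s hs
  rw [hs0, mul_zero] at h1
  exact le_antisymm (le_trans (le_of_eq rfl) h1) zero_le
end
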